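/- arXiv:1406.2271 — 7 statements merged into one kernel-verified Lean document; each statement's English description precedes it below -/
import Mathlib

section
/- Let G be a connected finite simple graph on n vertices and S a nonempty proper subset of vertices (the grounded nodes). Let λ be the smallest eigenvalue of the grounded Laplacian L_g(S), and let x be a nonnegative eigenvector of L_g(S) corresponding to λ, normalized so that its largest component equals 1, with smallest component x_min. Then λ ≥ (|∂S|/(n−|S|))·x_min. -/
open Filter

/-- The Laplacian matrix of a finite simple graph, over `ℝ`. -/
noncomputable def lapR {V : Type*} [Fintype V] [DecidableEq V] (G : SimpleGraph V) :
    Matrix V V ℝ :=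
  letI := Classical.decRel G.Adj
  SimpleGraph.lapMatrix ℝ G

/-- The grounded Laplacian: the principal submatrix of the Laplacian obtained by deleting
the rows and columns indexed by the grounded set `S`. -/
noncomputable def groundedLaplacian {V : Type*} [Fintype V] [DecidableEq V]
    (G : SimpleGraph V) (S : Finset V) :
    Matrix {v : V // v ∉ S} {v : V // v ∉ S} ℝ :=
  (lapR G).submatrix Subtype.val Subtype.val

/-- The number of edges of `G` with exactly one endpoint in `X` (counted once per edge). -/
noncomputable def boundaryCard {V : Type*} [Fintype V] [DecidableEq V]
    (G : SimpleGraph V) (X : Finset V) : ℕ :=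
  letI := Classical.decRel G.Adj
  (Finset.univ.filter fun p : V × V => p.1 ∈ X ∧ p.2 ∉ X ∧ G.Adj p.1 p.2).card

/-- `lam` is the smallest (real) eigenvalue of the matrix `M`. -/
def IsSmallestEigenvalue {m : Type*} [Fintype m] (M : Matrix m m ℝ) (lam : ℝ) : Prop :=
  (∃ x : m → ℝ, x ≠ 0 ∧ M.mulVec x = lam • x) ∧
  ∀ μ : ℝ, (∃ x : m → ℝ, x ≠ 0 ∧ M.mulVec x = μ • x) → lam ≤ μ

/-- The second-smallest root (with multiplicity) of the characteristic polynomial of `M`. -/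
noncomputable def secondSmallestEigenvalue {m : Type*} [Fintype m] [DecidableEq m]
    (M : Matrix m m ℝ) : ℝ :=
  (M.charpoly.roots.sort (· ≤ ·)).getD 1 0

/-- The subgraph induced on the complement of `S`, as a graph on the subtype. -/
def inducedSub {V : Type*} [DecidableEq V] (G : SimpleGraph V) (S : Finset V) :
    SimpleGraph {v : V // v ∉ S} :=
  SimpleGraph.comap Subtype.val G

/-- The degree of vertex `v` in `G`. -/
noncomputable def degOf {V : Type*} [Fintype V] [DecidableEq V] (G : SimpleGraph V) (v : V) : ℕ :=
  letI := Classical.decRel G.Adj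
  G.degree v

/-- For a connected graph `G` on `n` vertices with grounded set `S` (nonempty and
proper), if `lam` is the smallest eigenvalue of the grounded Laplacian and `x` a corresponding
nonnegative eigenvector normalized so its largest component equals `1`, then
`lam ≥ (|∂S|/(n-|S|)) · x_min`. -/
theorem smallest_eigenvalue_lower_bound {n : ℕ} (G : SimpleGraph (Fin n))
    (hG : G.Connected) (S : Finset (Fin n)) (hS : S.Nonempty) (hSp : S ⊂ Finset.univ)
    (lam : ℝ) (hlam : IsSmallestEigenvalue (groundedLaplacian G S) lam)
    (x : {v : Fin n // v ∉ S} → ℝ) (hx0 : x ≠ 0)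
    (heig : (groundedLaplacian G S).mulVec x = lam • x)
    (hxnn : ∀ i, 0 ≤ x i)
    (hxle : ∀ i, x i ≤ 1) (hxmax : ∃ i, x i = 1)
    (xmin : ℝ) (hxminle : ∀ i, xmin ≤ x i) (hxminmem : ∃ i, x i = xmin) :
    (boundaryCard G S : ℝ) / ((n : ℝ) - S.card) * xmin ≤ lam := by
  classical
  letI : DecidableRel G.Adj := Classical.decRel G.Adj
  -- cardinality facts
  have hcardT : (Fintype.card {v : Fin n // v ∉ S} : ℝ) = (n : ℝ) - S.card := by
    have h1 : Fintype.card {v : Fin n // v ∉ S} = Sᶜ.card := by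
      rw [Fintype.card_subtype]
      congr 1
      ext v
      simp
    have h2 : S.card ≤ n := by simpa using Finset.card_le_card hSp.subset
    rw [h1, Finset.card_compl, Fintype.card_fin, Nat.cast_sub h2]
  have hm : (0 : ℝ) < (n : ℝ) - S.card := by
    have h2 : S.card < n := by
      have := Finset.card_lt_card hSp
      simpa using this
    have := Nat.cast_lt (α := ℝ) |>.2 h2
    linarith
  -- lam ≥ 0
  have hpsd : (groundedLaplacian G S).PosSemidef :=
    (SimpleGraph.posSemidef_lapMatrix ℝ G).submatrix _
  have hlam0 : 0 ≤ lam := by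
    have hq := hpsd.dotProduct_mulVec_nonneg x
    rw [heig] at hq
    have hxx : 0 < dotProduct x x := by
      simpa using Matrix.dotProduct_self_star_pos_iff.2 hx0
    have hle : 0 ≤ lam * dotProduct x x := by
      simpa [dotProduct, Finset.mul_sum, mul_comm, mul_left_comm] using hq
    nlinarith
  -- column sums
  set c : {v : Fin n // v ∉ S} → ℝ :=
    fun j => ∑ v ∈ S, (if G.Adj v j.val then (1:ℝ) else 0) with hc
  have hcnn : ∀ j, 0 ≤ c j := fun j => Finset.sum_nonneg (fun v _ => by positivity)
  have hcol : ∀ j : {v : Fin n // v ∉ S},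
      ∑ i : {v : Fin n // v ∉ S}, groundedLaplacian G S i j = c j := by
    intro j
    have hzero : ∑ v : Fin n, G.lapMatrix ℝ v j.val = 0 := by
      have h1 := congrFun (G.lapMatrix_mulVec_const_eq_zero (R := ℝ)) j.val
      simp only [Matrix.mulVec, dotProduct, mul_one] at h1
      calc ∑ v : Fin n, G.lapMatrix ℝ v j.val = ∑ v, G.lapMatrix ℝ j.val v := by
            refine Finset.sum_congr rfl fun v _ => ?_
            exact (congrFun (congrFun (G.isSymm_lapMatrix (R := ℝ)).eq.symm j.val) v).symm
        _ = 0 := h1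
    have hsplit : ∑ v : Fin n, G.lapMatrix ℝ v j.val
        = ∑ v ∈ S, G.lapMatrix ℝ v j.val + ∑ v ∈ Sᶜ, G.lapMatrix ℝ v j.val := by
      rw [Finset.sum_add_sum_compl]
    have hsub : ∑ v ∈ Sᶜ, G.lapMatrix ℝ v j.val
        = ∑ i : {v : Fin n // v ∉ S}, groundedLaplacian G S i j := by
      rw [Finset.sum_subtype Sᶜ (fun v => Finset.mem_compl)]
      rfl
    have hSterm : ∑ v ∈ S, G.lapMatrix ℝ v j.val = -c j := by
      rw [hc, ← Finset.sum_neg_distrib]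
      refine Finset.sum_congr rfl fun v hv => ?_
      have hne : v ≠ j.val := fun h => j.2 (h ▸ hv)
      simp [SimpleGraph.lapMatrix, SimpleGraph.degMatrix, hne]
    have h0 := hzero
    rw [hsplit, hSterm, hsub] at h0
    linarith
  -- sum of c equals boundaryCard
  have hB : (boundaryCard G S : ℝ) = ∑ j : {v : Fin n // v ∉ S}, c j := by
    have h1 : (boundaryCard G S : ℝ)
        = ∑ p : Fin n × Fin n, (if p.1 ∈ S ∧ p.2 ∉ S ∧ G.Adj p.1 p.2 then (1:ℝ) else 0) := by
      rw [boundaryCard, Finset.card_filter]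
      push_cast
      rfl
    rw [h1, Fintype.sum_prod_type_right]
    have h2 : ∀ w : Fin n, (∑ v : Fin n, (if v ∈ S ∧ w ∉ S ∧ G.Adj v w then (1:ℝ) else 0))
        = if w ∈ Sᶜ then ∑ v ∈ S, (if G.Adj v w then (1:ℝ) else 0) else 0 := by
      intro w
      by_cases hw : w ∈ S
      · simp [hw]
      · simp only [Finset.mem_compl, hw, not_false_iff, if_true, true_and]
        simp only [ite_and, Finset.sum_ite_mem, Finset.univ_inter]
    calc ∑ w : Fin n, ∑ v : Fin n, (if v ∈ S ∧ w ∉ S ∧ G.Adj v w then (1:ℝ) else 0)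
        = ∑ w : Fin n, (if w ∈ Sᶜ then ∑ v ∈ S, (if G.Adj v w then (1:ℝ) else 0) else 0) :=
          Finset.sum_congr rfl fun w _ => h2 w
      _ = ∑ w ∈ Sᶜ, ∑ v ∈ S, (if G.Adj v w then (1:ℝ) else 0) := by
          rw [Finset.sum_ite_mem, Finset.univ_inter]
      _ = ∑ j : {v : Fin n // v ∉ S}, c j := by
          rw [Finset.sum_subtype Sᶜ (fun v => Finset.mem_compl)]
  -- eigen sum identity
  have hsum : lam * ∑ i : {v : Fin n // v ∉ S}, x i
      = ∑ j : {v : Fin n // v ∉ S}, c j * x j := by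
    have h1 : ∑ i : {v : Fin n // v ∉ S}, (groundedLaplacian G S).mulVec x i
        = lam * ∑ i : {v : Fin n // v ∉ S}, x i := by
      rw [heig]; simp [Finset.mul_sum]
    rw [← h1]
    simp only [Matrix.mulVec, dotProduct]
    rw [Finset.sum_comm]
    refine Finset.sum_congr rfl fun j _ => ?_
    rw [← Finset.sum_mul, hcol j]
  -- put it together
  have hge : xmin * (boundaryCard G S : ℝ) ≤ lam * ∑ i : {v : Fin n // v ∉ S}, x i := by
    rw [hsum, hB, Finset.mul_sum]
    refine Finset.sum_le_sum fun j _ => ?_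
    calc xmin * c j = c j * xmin := mul_comm _ _
      _ ≤ c j * x j := mul_le_mul_of_nonneg_left (hxminle j) (hcnn j)
  have hsumle : ∑ i : {v : Fin n // v ∉ S}, x i ≤ (n : ℝ) - S.card := by
    calc ∑ i : {v : Fin n // v ∉ S}, x i
        ≤ ∑ _i : {v : Fin n // v ∉ S}, (1:ℝ) := Finset.sum_le_sum fun i _ => hxle i
      _ = (Fintype.card {v : Fin n // v ∉ S} : ℝ) := by simp
      _ = (n : ℝ) - S.card := hcardT
  rw [div_mul_eq_mul_div, div_le_iff₀ hm]
  calc (boundaryCard G S : ℝ) * xmin = xmin * (boundaryCard G S : ℝ) := mul_comm _ _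
    _ ≤ lam * ∑ i : {v : Fin n // v ∉ S}, x i := hge
    _ ≤ lam * ((n:ℝ) - S.card) := mul_le_mul_of_nonneg_left hsumle hlam0
end

section
/- Let G be a finite simple graph on n vertices and S a nonempty proper subset of vertices. Then the smallest eigenvalue λ of the grounded Laplacian L_g(S) satisfies λ ≤ |∂X|/|X| for every nonempty subset X ⊆ V∖S; in particular λ ≤ min over nonempty X ⊆ V∖S of |∂X|/|X|. -/
open Filter

open Finset Matrix
lemma rayleigh_min {m : Type*} [Fintype m] [DecidableEq m] {M : Matrix m m ℝ}
    (hM : M.IsHermitian) {lam : ℝ}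
    (hlam : ∀ μ : ℝ, (∃ x : m → ℝ, x ≠ 0 ∧ M.mulVec x = μ • x) → lam ≤ μ)
    (x : m → ℝ) : lam * (x ⬝ᵥ x) ≤ x ⬝ᵥ M.mulVec x := by
  classical
  set b := hM.eigenvectorBasis with hb
  set c : m → ℝ := fun i => b.repr (WithLp.toLp 2 x) i with hc
  have hbx : ∀ i, x ⬝ᵥ ⇑(b i) = c i := by
    intro i
    have h1 := (b.repr_apply_apply (WithLp.toLp 2 x) i).symm
    simp only [PiLp.inner_apply, RCLike.inner_apply, starRingEnd_apply, star_trivial] at h1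
    rw [hc]
    simp only [← h1, dotProduct]
  -- helper: dot product with a sum
  have dps : ∀ (f : m → m → ℝ), x ⬝ᵥ (∑ i, f i) = ∑ i, x ⬝ᵥ f i := by
    intro f
    simp only [dotProduct, Finset.sum_apply, Finset.mul_sum]
    exact Finset.sum_comm
  -- x as a combination of eigenvectors (in the plain Pi type)
  have hxs : x = ∑ i, c i • (⇑(b i) : m → ℝ) := by
    have evalAM : ∀ j : m, ∃ φ : EuclideanSpace ℝ m →+ ℝ, ∀ v, φ v = v j := by
      intro j
      exact ⟨{ toFun := fun v => v j, map_zero' := rfl, map_add' := fun _ _ => rfl }, fun _ => rfl⟩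
    funext j
    obtain ⟨φ, hφ⟩ := evalAM j
    have h2 := congrArg φ (b.sum_repr (WithLp.toLp 2 x))
    rw [map_sum] at h2
    simp only [hφ] at h2
    rw [Finset.sum_apply]
    rw [← h2]
    refine Finset.sum_congr rfl fun i _ => ?_
    simp [hc]
  have hev : ∀ i, lam ≤ hM.eigenvalues i := by
    intro i
    refine hlam _ ⟨⇑(b i), ?_, hM.mulVec_eigenvectorBasis i⟩
    intro h0
    exact b.orthonormal.ne_zero i (by ext j; exact congrFun h0 j)
  have hxx : x ⬝ᵥ x = ∑ i, c i * c i := by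
    conv_lhs => rw [show x ⬝ᵥ x = x ⬝ᵥ (∑ i, c i • (⇑(b i) : m → ℝ)) from by rw [← hxs]]
    rw [dps]
    refine Finset.sum_congr rfl fun i _ => ?_
    rw [dotProduct_smul, smul_eq_mul, hbx i]
  have hMx : x ⬝ᵥ M.mulVec x = ∑ i, hM.eigenvalues i * (c i * c i) := by
    have hmv : M.mulVec x = ∑ i, (c i * hM.eigenvalues i) • (⇑(b i) : m → ℝ) := by
      conv_lhs => rw [hxs]
      rw [← Matrix.mulVecLin_apply, map_sum]
      refine Finset.sum_congr rfl fun i _ => ?_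
      rw [LinearMap.map_smul, Matrix.mulVecLin_apply, hM.mulVec_eigenvectorBasis i]
      rw [smul_smul, mul_comm]
    rw [hmv, dps]
    refine Finset.sum_congr rfl fun i _ => ?_
    rw [dotProduct_smul, smul_eq_mul, hbx i]
    ring
  rw [hxx, hMx, Finset.mul_sum]
  exact Finset.sum_le_sum fun i _ =>
    mul_le_mul_of_nonneg_right (hev i) (mul_self_nonneg _)

/-- The smallest eigenvalue `lam` of the grounded Laplacian satisfies
`lam ≤ |∂X| / |X|` for every nonempty subset `X ⊆ V \ S`; in particular `lam` is at most the
minimum of this quantity over all such `X`. -/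
theorem smallest_eigenvalue_upper_bound_subsets {n : ℕ} (G : SimpleGraph (Fin n))
    (S : Finset (Fin n)) (hS : S.Nonempty) (hSp : S ⊂ Finset.univ)
    (lam : ℝ) (hlam : IsSmallestEigenvalue (groundedLaplacian G S) lam) :
    ∀ X : Finset (Fin n), X.Nonempty → (∀ v ∈ X, v ∉ S) →
      lam ≤ (boundaryCard G X : ℝ) / X.card := by
  classical
  intro X hX hXS
  letI := Classical.decRel G.Adj
  set L : Matrix (Fin n) (Fin n) ℝ := lapR G with hL
  set M : Matrix {v : Fin n // v ∉ S} {v : Fin n // v ∉ S} ℝ := groundedLaplacian G S with hM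
  have hMH : M.IsHermitian := by
    rw [hM]
    show (groundedLaplacian G S)ᴴ = groundedLaplacian G S
    rw [groundedLaplacian]
    rw [Matrix.conjTranspose_eq_transpose_of_trivial, Matrix.transpose_submatrix]
    have hsym : (lapR G)ᵀ = lapR G := G.isSymm_lapMatrix ℝ
    rw [hsym]
  set y : Fin n → ℝ := fun v => if v ∈ X then 1 else 0 with hy
  set x : {v : Fin n // v ∉ S} → ℝ := fun v => y v.val with hx
  -- restriction of sums
  have hrestrict : ∀ f : Fin n → ℝ, (∀ u ∈ S, f u = 0) →
      ∑ u : Fin n, f u = ∑ u : {v : Fin n // v ∉ S}, f u.val := by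
    intro f hf
    rw [← Finset.sum_subtype (Finset.univ.filter (· ∉ S)) (fun v => by simp) f]
    rw [Finset.sum_filter]
    refine Finset.sum_congr rfl fun u _ => ?_
    by_cases hu : u ∈ S
    · simp [hu, hf u hu]
    · simp [hu]
  have hyS : ∀ u ∈ S, y u = 0 := by
    intro u hu
    have : u ∉ X := fun hX' => (hXS u hX') hu
    simp [hy, this]
  -- quadratic forms agree
  have hquad : x ⬝ᵥ M.mulVec x = y ⬝ᵥ L.mulVec y := by
    rw [dotProduct, dotProduct]
    rw [hrestrict (fun u => y u * (L.mulVec y) u) (fun u hu => by rw [hyS u hu, zero_mul])]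
    refine Finset.sum_congr rfl fun u _ => ?_
    congr 1
    rw [Matrix.mulVec, Matrix.mulVec, dotProduct, dotProduct]
    rw [hrestrict (fun v => L u.val v * y v)
      (fun v hv => by rw [hyS v hv, mul_zero])]
    rfl
  -- value of the quadratic form
  have hval : y ⬝ᵥ L.mulVec y = (boundaryCard G X : ℝ) := by
    have h1 : y ⬝ᵥ L.mulVec y =
        (∑ i : Fin n, ∑ j : Fin n, if G.Adj i j then (y i - y j)^2 else 0) / 2 := by
      rw [← Matrix.toLinearMap₂'_apply']
      rw [hL, lapR]
      exact SimpleGraph.lapMatrix_toLinearMap₂' ℝ G y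
    have hpt : ∀ i j : Fin n, (if G.Adj i j then (y i - y j)^2 else 0) =
        (if i ∈ X ∧ j ∉ X ∧ G.Adj i j then (1:ℝ) else 0)
        + (if j ∈ X ∧ i ∉ X ∧ G.Adj i j then (1:ℝ) else 0) := by
      intro i j
      by_cases hij : G.Adj i j
      · by_cases hi : i ∈ X <;> by_cases hj : j ∈ X
        · simp [hy, hi, hj, hij]
        · simp [hy, hi, hj, hij]
        · simp [hy, hi, hj, hij]
        · simp [hy, hi, hj, hij]
      · simp [hij]
    have hbc : ∑ i : Fin n, ∑ j : Fin n,
        (if i ∈ X ∧ j ∉ X ∧ G.Adj i j then (1:ℝ) else 0) = (boundaryCard G X : ℝ) := by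
      rw [boundaryCard]
      rw [show ((Finset.univ.filter fun p : Fin n × Fin n =>
          p.1 ∈ X ∧ p.2 ∉ X ∧ G.Adj p.1 p.2).card : ℝ) =
          ∑ p : Fin n × Fin n, if p.1 ∈ X ∧ p.2 ∉ X ∧ G.Adj p.1 p.2 then (1:ℝ) else 0 by
        rw [Finset.sum_boole]]
      rw [Fintype.sum_prod_type]
    have hbc2 : ∑ i : Fin n, ∑ j : Fin n,
        (if j ∈ X ∧ i ∉ X ∧ G.Adj i j then (1:ℝ) else 0) = (boundaryCard G X : ℝ) := by
      rw [Finset.sum_comm]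
      rw [← hbc]
      refine Finset.sum_congr rfl fun i _ => Finset.sum_congr rfl fun j _ => ?_
      refine if_congr ?_ rfl rfl
      constructor
      · rintro ⟨h1, h2, h3⟩; exact ⟨h1, h2, h3.symm⟩
      · rintro ⟨h1, h2, h3⟩; exact ⟨h1, h2, h3.symm⟩
    rw [h1]
    simp_rw [hpt]
    simp_rw [Finset.sum_add_distrib]
    rw [hbc, hbc2]
    ring
  -- norm of x
  have hxx : x ⬝ᵥ x = (X.card : ℝ) := by
    rw [dotProduct]
    rw [show ∑ u : {v : Fin n // v ∉ S}, x u * x u = ∑ u : Fin n, y u * y u from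
      (hrestrict (fun u => y u * y u) (fun u hu => by rw [hyS u hu, zero_mul])).symm]
    have : ∀ u : Fin n, y u * y u = if u ∈ X then (1:ℝ) else 0 := by
      intro u; by_cases hu : u ∈ X <;> simp [hy, hu]
    simp_rw [this]
    rw [Finset.sum_boole]
    simp
  have hcard : (0:ℝ) < X.card := by
    exact_mod_cast Finset.card_pos.mpr hX
  have hkey : lam * (X.card : ℝ) ≤ (boundaryCard G X : ℝ) := by
    calc lam * (X.card : ℝ) = lam * (x ⬝ᵥ x) := by rw [hxx]
      _ ≤ x ⬝ᵥ M.mulVec x := rayleigh_min hMH hlam.2 x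
      _ = (boundaryCard G X : ℝ) := by rw [hquad, hval]
  rw [le_div_iff₀ hcard]
  exact hkey
end

section
/- Let G be a finite simple graph on n vertices and S a nonempty proper subset of vertices. Then the smallest eigenvalue λ of the grounded Laplacian L_g(S) satisfies λ ≤ |∂S|/(n−|S|). -/
open Filter

section AuxProof
open Matrix

lemma rayleigh_aux {m : Type*} [Fintype m] [DecidableEq m] {M : Matrix m m ℝ}
    (hM : M.IsHermitian) {lam : ℝ} (hlam : IsSmallestEigenvalue M lam) (x : m → ℝ) :
    lam * (x ⬝ᵥ x) ≤ x ⬝ᵥ (M *ᵥ x) := by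
  have hstar : star (hM.eigenvectorUnitary : Matrix m m ℝ)
      = (hM.eigenvectorUnitary : Matrix m m ℝ)ᵀ := by
    rw [Matrix.star_eq_conjTranspose, Matrix.conjTranspose_eq_transpose_of_trivial]
  set U : Matrix m m ℝ := (hM.eigenvectorUnitary : Matrix m m ℝ) with hU
  have hle : ∀ i : m, lam ≤ hM.eigenvalues i := by
    intro i
    apply hlam.2
    refine ⟨⇑(hM.eigenvectorBasis i), ?_, hM.mulVec_eigenvectorBasis i⟩
    intro h0
    have : hM.eigenvectorBasis i = 0 := by
      ext j; exact congrFun h0 j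
    have h1 := hM.eigenvectorBasis.orthonormal.1 i
    rw [this] at h1
    simp at h1
  set y : m → ℝ := Uᵀ *ᵥ x with hy
  have hyx : x ᵥ* U = y := by
    rw [hy, Matrix.mulVec_transpose]
  have h1 : x ⬝ᵥ (M *ᵥ x) = ∑ i, hM.eigenvalues i * (y i)^2 := by
    conv_lhs => rw [hM.spectral_theorem]
    rw [Unitary.conjStarAlgAut_apply, hstar, ← Matrix.mulVec_mulVec, ← Matrix.mulVec_mulVec, dotProduct_mulVec, hyx,
      ← hy]
    simp [Matrix.mulVec_diagonal, dotProduct]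
    apply Finset.sum_congr rfl
    intro i _
    ring
  have h2 : x ⬝ᵥ x = ∑ i, (y i)^2 := by
    have : x ⬝ᵥ x = y ⬝ᵥ y := by
      rw [hy, dotProduct_mulVec, Matrix.vecMul_transpose, Matrix.mulVec_mulVec,
        show U * Uᵀ = 1 by
          rw [← hstar]; exact Matrix.mem_unitaryGroup_iff.mp hM.eigenvectorUnitary.2,
        Matrix.one_mulVec]
    rw [this]
    simp [dotProduct, sq]
  rw [h1, h2, Finset.mul_sum]
  apply Finset.sum_le_sum
  intro i _
  exact mul_le_mul_of_nonneg_right (hle i) (sq_nonneg _)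


lemma key_sum {V : Type*} [Fintype V] [DecidableEq V] (G : SimpleGraph V) (S : Finset V) :
    ∑ i : {v : V // v ∉ S}, ∑ j : {v : V // v ∉ S}, lapR G i.val j.val
      = (boundaryCard G S : ℝ) := by
  letI := Classical.decRel G.Adj
  have hsub : ∀ f : V → ℝ, ∑ i : {v : V // v ∉ S}, f i.val = ∑ i ∈ Sᶜ, f i := by
    intro f
    exact (Finset.sum_subtype Sᶜ (fun x => Finset.mem_compl) f).symm
  rw [hsub (fun i => ∑ j : {v : V // v ∉ S}, lapR G i j.val)]
  rw [Finset.sum_congr rfl (fun i _ => hsub (fun j => lapR G i j))]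
  have hrow : ∀ i : V, i ∉ S → ∑ j ∈ Sᶜ, lapR G i j
      = ∑ j ∈ S, (if G.Adj i j then (1:ℝ) else 0) := by
    intro i hi
    have htot : ∑ j, lapR G i j = 0 := by
      have := congrFun (SimpleGraph.lapMatrix_mulVec_const_eq_zero (R := ℝ) G) i
      simpa [Matrix.mulVec, dotProduct, lapR] using this
    have hsplit := Finset.sum_compl_add_sum S (fun j => lapR G i j)
    have hS : ∑ j ∈ S, lapR G i j = ∑ j ∈ S, -(if G.Adj i j then (1:ℝ) else 0) := by
      apply Finset.sum_congr rfl
      intro j hj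
      have hij : i ≠ j := fun h => hi (h ▸ hj)
      simp [lapR, SimpleGraph.lapMatrix, SimpleGraph.degMatrix, hij]
    rw [hS] at hsplit
    rw [htot] at hsplit
    linarith [hsplit, Finset.sum_neg_distrib (s := S) (f := fun j => if G.Adj i j then (1:ℝ) else 0)]
  rw [Finset.sum_congr rfl (fun i hi => hrow i (Finset.mem_compl.mp hi))]
  have : ∑ i ∈ Sᶜ, ∑ j ∈ S, (if G.Adj i j then (1:ℝ) else 0)
      = ((Sᶜ ×ˢ S).filter fun p : V × V => G.Adj p.1 p.2).card := by
    rw [← Finset.sum_product']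
    rw [Finset.sum_boole]
  rw [this]
  norm_cast
  unfold boundaryCard
  apply Finset.card_nbij' (fun p => p.swap) (fun p => p.swap)
  · intro p hp
    simp only [Finset.mem_coe, Finset.mem_filter, Finset.mem_product, Finset.mem_compl] at hp ⊢
    exact ⟨Finset.mem_univ _, hp.1.2, hp.1.1, hp.2.symm⟩
  · intro p hp
    simp only [Finset.mem_coe, Finset.mem_filter, Finset.mem_product, Finset.mem_compl] at hp ⊢
    exact ⟨⟨hp.2.2.1, hp.2.1⟩, hp.2.2.2.symm⟩
  · intro p _; rfl
  · intro p _; rfl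

end AuxProof

/-- The smallest eigenvalue `lam` of the grounded Laplacian satisfies
`lam ≤ |∂S| / (n - |S|)`. -/
theorem smallest_eigenvalue_upper_bound_boundary {n : ℕ} (G : SimpleGraph (Fin n))
    (S : Finset (Fin n)) (hS : S.Nonempty) (hSp : S ⊂ Finset.univ)
    (lam : ℝ) (hlam : IsSmallestEigenvalue (groundedLaplacian G S) lam) :
    lam ≤ (boundaryCard G S : ℝ) / ((n : ℝ) - S.card) := by
  classical
  set m := {v : Fin n // v ∉ S}
  have hM : (groundedLaplacian G S).IsHermitian := by
    unfold groundedLaplacian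
    rw [Matrix.IsHermitian, Matrix.conjTranspose_eq_transpose_of_trivial,
      Matrix.transpose_submatrix]
    exact congrArg (fun A => Matrix.submatrix A Subtype.val Subtype.val)
      (SimpleGraph.isSymm_lapMatrix (R := ℝ) G)
  have hray := rayleigh_aux hM hlam (fun _ => (1:ℝ))
  obtain ⟨v, -, hv⟩ := Finset.exists_of_ssubset hSp
  have hcard : S.card < n := by
    have := Finset.card_lt_card hSp
    simpa using this
  have hD : (0:ℝ) < (n : ℝ) - S.card := by
    have : (S.card : ℝ) < n := by exact_mod_cast hcard
    linarith
  have hxx : dotProduct (fun (_ : m) => (1:ℝ)) (fun _ => (1:ℝ)) = (n : ℝ) - S.card := by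
    simp only [dotProduct, mul_one]
    rw [Finset.sum_const, Finset.card_univ, nsmul_eq_mul, mul_one]
    have : Fintype.card m = n - S.card := by
      rw [show Fintype.card m = Sᶜ.card from (Fintype.card_subtype_compl _).trans (by
        simp [Finset.card_compl])]
      simp [Finset.card_compl]
    rw [this, Nat.cast_sub hcard.le]
  have hQ : dotProduct (fun (_ : m) => (1:ℝ)) ((groundedLaplacian G S).mulVec (fun _ => (1:ℝ)))
      = (boundaryCard G S : ℝ) := by
    rw [← key_sum G S]
    simp [dotProduct, Matrix.mulVec, groundedLaplacian]
    rfl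
  rw [hxx, hQ] at hray
  rw [le_div_iff₀ hD]
  exact hray
end

section
/- Let G be a finite simple graph on n vertices and S a nonempty proper subset of vertices. Then the smallest eigenvalue λ of the grounded Laplacian L_g(S) satisfies λ ≤ |S|, with equality if and only if every node of S is adjacent to every node of V∖S. -/
open Filter

section Aux

open Matrix

lemma aux_psd_sub_smul {m : Type*} [Fintype m] [DecidableEq m]
    {M : Matrix m m ℝ} (hM : M.IsHermitian) {lam : ℝ}
    (h : IsSmallestEigenvalue M lam) : (M - lam • 1).PosSemidef := by
  have hH : (M - lam • (1 : Matrix m m ℝ)).IsHermitian := by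
    refine hM.sub ?_
    simp [Matrix.IsHermitian, Matrix.conjTranspose_smul]
  refine hH.posSemidef_iff_eigenvalues_nonneg.mpr fun i => ?_
  have hv := hH.mulVec_eigenvectorBasis i
  set v : m → ℝ := ⇑(hH.eigenvectorBasis i) with hvdef
  have hv0 : v ≠ 0 := by
    have h1 := hH.eigenvectorBasis.orthonormal.ne_zero i
    intro hc
    apply h1
    ext j
    exact congrFun hc j
  have hMv : M *ᵥ v = (hH.eigenvalues i + lam) • v := by
    have h2 : (M - lam • 1) *ᵥ v = M *ᵥ v - lam • v := by
      simp [Matrix.sub_mulVec, Matrix.smul_mulVec, Matrix.one_mulVec]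
    rw [h2] at hv
    have : M *ᵥ v = hH.eigenvalues i • v + lam • v := by
      rw [← hv]; abel
    rw [this, ← add_smul]
  have := h.2 (hH.eigenvalues i + lam) ⟨v, hv0, hMv⟩
  rw [Pi.zero_apply]; linarith

lemma aux_rowsum {n : ℕ} (G : SimpleGraph (Fin n)) (S : Finset (Fin n)) (w : Fin n) (hw : w ∉ S) :
    letI := Classical.decRel G.Adj
    ∑ v : {v : Fin n // v ∉ S}, lapR G w v.val
      = ∑ v ∈ S, (if G.Adj w v then (1:ℝ) else 0) := by
  letI := Classical.decRel G.Adj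
  have htot : ∑ v : Fin n, lapR G w v = 0 := by
    have h0 := congrFun (SimpleGraph.lapMatrix_mulVec_const_eq_zero (R := ℝ) G) w
    simpa [Matrix.mulVec, dotProduct, lapR] using h0
  have hsplit : ∑ v ∈ S, lapR G w v + ∑ v ∈ Sᶜ, lapR G w v = 0 := by
    rw [Finset.sum_add_sum_compl]; exact htot
  have hsub : ∑ v : {v : Fin n // v ∉ S}, lapR G w v.val = ∑ v ∈ Sᶜ, lapR G w v := by
    rw [← Finset.sum_coe_sort Sᶜ (fun v => lapR G w v)]
    exact Fintype.sum_equiv (Equiv.subtypeEquivRight (fun v => (Finset.mem_compl).symm))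
      _ _ (fun x => rfl)
  have hS : ∑ v ∈ S, lapR G w v = -∑ v ∈ S, (if G.Adj w v then (1:ℝ) else 0) := by
    rw [← Finset.sum_neg_distrib]
    refine Finset.sum_congr rfl fun v hv => ?_
    have hne : w ≠ v := fun h => hw (h ▸ hv)
    simp [lapR, SimpleGraph.lapMatrix, SimpleGraph.degMatrix, SimpleGraph.adjMatrix, hne]
  rw [hsub]
  linarith [hsplit, hS]

lemma aux_deg_split {n : ℕ} (G : SimpleGraph (Fin n)) (S : Finset (Fin n))
    [inst : DecidableRel G.Adj] {w : Fin n} (hw : w ∉ S)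
    (hadj : ∀ s ∈ S, G.Adj s w) :
    letI : DecidableRel (inducedSub G S).Adj := fun a b => inst a.val b.val
    G.degree w = S.card + (inducedSub G S).degree ⟨w, hw⟩ := by
  letI : DecidableRel (inducedSub G S).Adj := fun a b => inst a.val b.val
  have hsub : S ⊆ G.neighborFinset w := fun s hs =>
    (SimpleGraph.mem_neighborFinset G w s).2 (hadj s hs).symm
  have h1 : (G.neighborFinset w \ S).card + S.card = G.degree w :=
    Finset.card_sdiff_add_card_eq_card hsub
  have h2 : (G.neighborFinset w \ S).card = (inducedSub G S).degree ⟨w, hw⟩ := by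
    rw [SimpleGraph.degree, ← Finset.card_attach (s := G.neighborFinset w \ S)]
    apply Finset.card_bij
      (fun a _ => (⟨a.val, (Finset.mem_sdiff.1 a.property).2⟩ : {v : Fin n // v ∉ S}))
    · intro a _
      have := (Finset.mem_sdiff.1 a.property).1
      simp only [SimpleGraph.mem_neighborFinset] at this ⊢
      exact this
    · intro a _ b _ hab
      have h : (a.val : Fin n) = b.val := by simpa using hab
      exact Subtype.ext h
    · intro b hb
      simp only [SimpleGraph.mem_neighborFinset] at hb
      refine ⟨⟨b.val, Finset.mem_sdiff.2 ⟨?_, b.property⟩⟩, Finset.mem_attach _ _, rfl⟩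
      exact (SimpleGraph.mem_neighborFinset G w b.val).2 hb
  omega

lemma aux_grounded_eq {n : ℕ} (G : SimpleGraph (Fin n)) (S : Finset (Fin n))
    (hadj : ∀ s ∈ S, ∀ v : Fin n, v ∉ S → G.Adj s v) :
    letI := Classical.decRel G.Adj
    letI : DecidableRel (inducedSub G S).Adj := fun a b => Classical.decRel G.Adj a.val b.val
    groundedLaplacian G S - (S.card : ℝ) • 1 = (inducedSub G S).lapMatrix ℝ := by
  letI inst := Classical.decRel G.Adj
  letI : DecidableRel (inducedSub G S).Adj := fun a b => inst a.val b.val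
  ext u v
  have hdeg : G.degree u.val = S.card + (inducedSub G S).degree u := by
    have := aux_deg_split G S (inst := inst) u.property
      (fun s hs => hadj s hs u.val u.property)
    simpa using this
  by_cases huv : u = v
  · subst huv
    have hirr : ¬ G.Adj u.val u.val := G.irrefl
    simp only [Matrix.sub_apply, Matrix.smul_apply, Matrix.one_apply_eq, smul_eq_mul, mul_one,
      groundedLaplacian, Matrix.submatrix_apply, lapR, SimpleGraph.lapMatrix,
      SimpleGraph.degMatrix, SimpleGraph.adjMatrix]
    simp only [Matrix.sub_apply, Matrix.of_apply, Matrix.diagonal_apply_eq, hirr, if_false,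
      inducedSub, SimpleGraph.comap_adj]
    rw [hdeg]
    push_cast
    simp only [inducedSub]
    ring
  · have hval : u.val ≠ v.val := fun h => huv (Subtype.ext h)
    simp only [Matrix.sub_apply, Matrix.smul_apply, Matrix.one_apply_ne huv, smul_eq_mul,
      mul_zero, sub_zero, groundedLaplacian, Matrix.submatrix_apply, lapR,
      SimpleGraph.lapMatrix, SimpleGraph.degMatrix, SimpleGraph.adjMatrix]
    by_cases hA : G.Adj u.val v.val <;>
      simp [hval, huv, hA, inducedSub, SimpleGraph.comap_adj]

/-- The smallest eigenvalue `lam` of the grounded Laplacian satisfies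
`lam ≤ |S|`, with equality if and only if every grounded node is adjacent to every
non-grounded node. -/
theorem smallest_eigenvalue_upper_bound_card {n : ℕ} (G : SimpleGraph (Fin n))
    (S : Finset (Fin n)) (hS : S.Nonempty) (hSp : S ⊂ Finset.univ)
    (lam : ℝ) (hlam : IsSmallestEigenvalue (groundedLaplacian G S) lam) :
    lam ≤ (S.card : ℝ) ∧
      (lam = (S.card : ℝ) ↔ ∀ s ∈ S, ∀ v : Fin n, v ∉ S → G.Adj s v) := by
  letI instAdj := Classical.decRel G.Adj
  obtain ⟨w0, -, hw0⟩ := Finset.exists_of_ssubset hSp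
  haveI hne : Nonempty {v : Fin n // v ∉ S} := ⟨⟨w0, hw0⟩⟩
  set c : ℝ := (S.card : ℝ) with hc
  set k : ℝ := (Fintype.card {v : Fin n // v ∉ S} : ℝ) with hk
  have hkpos : (0:ℝ) < k := by
    rw [hk]; exact_mod_cast Fintype.card_pos
  -- Hermitian
  have hHerm : (groundedLaplacian G S).IsHermitian := by
    have hsym : (SimpleGraph.lapMatrix ℝ G).IsSymm := SimpleGraph.isSymm_lapMatrix (R := ℝ) (G := G)
    ext u v
    simp only [Matrix.conjTranspose_apply, star_trivial, groundedLaplacian,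
      Matrix.submatrix_apply, lapR]
    exact congrFun (congrFun hsym u.val) v.val
  have hpsd := aux_psd_sub_smul hHerm hlam
  set ones : {v : Fin n // v ∉ S} → ℝ := fun _ => 1 with hones
  set f : {v : Fin n // v ∉ S} → ℝ :=
    fun u => ∑ v ∈ S, (if G.Adj u.val v then (1:ℝ) else 0) with hf
  have hrow : ∀ u : {v : Fin n // v ∉ S},
      ∑ v : {v : Fin n // v ∉ S}, groundedLaplacian G S u v = f u := by
    intro u
    have h := aux_rowsum G S u.val u.property
    simpa [groundedLaplacian, hf] using h
  have hsum : dotProduct ones (groundedLaplacian G S *ᵥ ones) = ∑ u, f u := by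
    simp only [dotProduct, Matrix.mulVec, hones, one_mul, mul_one]
    exact Finset.sum_congr rfl fun u _ => hrow u
  have hq0 := hpsd.dotProduct_mulVec_nonneg ones
  have hstar : star ones = ones := by ext u; simp [hones]
  have h1 : (groundedLaplacian G S - lam • 1) *ᵥ ones
      = groundedLaplacian G S *ᵥ ones - lam • ones := by
    simp [Matrix.sub_mulVec, Matrix.smul_mulVec, Matrix.one_mulVec]
  have h2 : dotProduct ones (lam • ones) = lam * k := by
    simp only [dotProduct, hones, Pi.smul_apply, smul_eq_mul, one_mul, mul_one,
      Finset.sum_const, Finset.card_univ, nsmul_eq_mul, hk]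
    ring
  rw [hstar, h1, dotProduct_sub, hsum, h2] at hq0
  -- hq0 : 0 ≤ ∑ u, f u - lam * k
  have hfle : ∀ u ∈ (Finset.univ : Finset {v : Fin n // v ∉ S}), f u ≤ c := by
    intro u _
    calc f u ≤ ∑ v ∈ S, (1:ℝ) := Finset.sum_le_sum (fun v _ => by split <;> norm_num)
    _ = c := by simp [hc]
  have hub : ∑ u, f u ≤ c * k := by
    calc ∑ u, f u ≤ ∑ _u : {v : Fin n // v ∉ S}, c := Finset.sum_le_sum hfle
    _ = c * k := by
        simp only [Finset.sum_const, Finset.card_univ, nsmul_eq_mul, hk]; ring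
  have hmain : lam ≤ c := by
    have hlk : lam * k ≤ c * k := by linarith
    exact le_of_mul_le_mul_right hlk hkpos
  refine ⟨hmain, ?_, ?_⟩
  · -- lam = c → complete bipartite
    intro hl
    have hlow : ∑ _u : {v : Fin n // v ∉ S}, c ≤ ∑ u, f u := by
      have : (∑ _u : {v : Fin n // v ∉ S}, c) = c * k := by
        simp only [Finset.sum_const, Finset.card_univ, nsmul_eq_mul, hk]; ring
      rw [this]
      calc c * k = lam * k := by rw [hl]
      _ ≤ ∑ u, f u := by linarith
    have heq : ∑ u, f u = ∑ _u : {v : Fin n // v ∉ S}, c :=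
      le_antisymm (Finset.sum_le_sum hfle) hlow
    have hfeq := (Finset.sum_eq_sum_iff_of_le hfle).1 heq
    intro s hs v hv
    have hfv := hfeq ⟨v, hv⟩ (Finset.mem_univ _)
    have hc' : (∑ t ∈ S, (if G.Adj v t then (1:ℝ) else 0)) = ∑ t ∈ S, (1:ℝ) := by
      have : f ⟨v, hv⟩ = ∑ t ∈ S, (if G.Adj v t then (1:ℝ) else 0) := rfl
      rw [← this, hfv, hc]; simp
    have hind := (Finset.sum_eq_sum_iff_of_le
      (fun t _ => by split <;> norm_num : ∀ t ∈ S, (if G.Adj v t then (1:ℝ) else 0) ≤ 1)).1 hc'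
    have := hind s hs
    by_contra hA
    have hA' : ¬ G.Adj v s := fun h => hA h.symm
    rw [if_neg hA'] at this
    norm_num at this
  · -- complete bipartite → lam = c
    intro hadj
    refine le_antisymm hmain ?_
    letI : DecidableRel (inducedSub G S).Adj := fun a b => Classical.decRel G.Adj a.val b.val
    have heq := aux_grounded_eq G S hadj
    have hpsd2 : (groundedLaplacian G S - c • 1).PosSemidef := by
      rw [show groundedLaplacian G S - c • 1 = (inducedSub G S).lapMatrix ℝ from heq]
      exact SimpleGraph.posSemidef_lapMatrix ℝ (inducedSub G S)
    obtain ⟨x, hx0, hx⟩ := hlam.1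
    have hq := hpsd2.dotProduct_mulVec_nonneg x
    have hd0 : (0:ℝ) ≤ dotProduct x x :=
      Finset.sum_nonneg fun i _ => mul_self_nonneg _
    have hdne : dotProduct x x ≠ 0 := fun h => hx0 (dotProduct_self_eq_zero.1 h)
    have hdpos : (0:ℝ) < dotProduct x x := lt_of_le_of_ne hd0 (Ne.symm hdne)
    have hsx : star x = x := by ext u; simp
    have h1' : (groundedLaplacian G S - c • 1) *ᵥ x = lam • x - c • x := by
      simp [Matrix.sub_mulVec, Matrix.smul_mulVec, Matrix.one_mulVec, hx]
    rw [hsx, h1'] at hq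
    have h2' : dotProduct x (lam • x - c • x)
        = (lam - c) * dotProduct x x := by
      rw [dotProduct_sub, dotProduct_smul, dotProduct_smul]
      simp [sub_mul]
    rw [h2'] at hq
    nlinarith

end Aux
end

section
/- Let H be a connected finite simple graph on m ≥ 2 vertices with Laplacian matrix L̄, whose second-smallest eigenvalue is λ₂(L̄). Let s be a positive integer and let Δ = diag(α₁,…,α_m) be a diagonal matrix with integer entries satisfying 0 ≤ α_i ≤ s for all i, and set B = Σ_{i=1}^{m} α_i. Let x be a nonnegative eigenvector corresponding to the smallest eigenvalue of L̄ + Δ, normalized so that its largest component equals 1. Then the smallest component of x satisfies x_min ≥ 1 − 2·sqrt(s·B)/λ₂(L̄). -/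
open Filter

open Matrix

section AuxSpectral

open Polynomial Matrix

variable {n : Type*} [Fintype n] [DecidableEq n]

lemma lap_sum_mulVec {m : ℕ} (H : SimpleGraph (Fin m)) (v : Fin m → ℝ) :
    ∑ i, ((lapR H) *ᵥ v) i = 0 := by
  classical
  letI := Classical.decRel H.Adj
  have hsym : (lapR H).IsSymm := SimpleGraph.isSymm_lapMatrix ℝ H
  have hker : (lapR H) *ᵥ (fun _ => (1:ℝ)) = 0 := H.lapMatrix_mulVec_const_eq_zero
  have hcol : ∀ j, ∑ i, (lapR H) i j = 0 := by
    intro j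
    have h1 : ((lapR H) *ᵥ (fun _ => (1:ℝ))) j = 0 := by rw [hker]; rfl
    simp only [Matrix.mulVec, dotProduct, mul_one] at h1
    calc ∑ i, (lapR H) i j = ∑ i, (lapR H) j i := by
          refine Finset.sum_congr rfl fun i _ => ?_
          exact (hsym.apply j i).symm ▸ rfl
      _ = 0 := h1
  calc ∑ i, ((lapR H) *ᵥ v) i = ∑ i, ∑ j, (lapR H) i j * v j := rfl
    _ = ∑ j, (∑ i, (lapR H) i j) * v j := by
        rw [Finset.sum_comm]
        exact Finset.sum_congr rfl fun j _ => (Finset.sum_mul _ _ _).symm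
    _ = 0 := by simp [hcol]

lemma aux_charmatrix_diag (d : n → ℝ) :
    charmatrix (Matrix.diagonal d) = Matrix.diagonal (fun i => X - C (d i)) := by
  ext i j
  by_cases h : i = j
  · subst h; simp
  · simp [h, Matrix.diagonal_apply_ne _ h]

lemma aux_charpoly_diag (d : n → ℝ) :
    (Matrix.diagonal d).charpoly = ∏ i, (X - C (d i)) := by
  rw [Matrix.charpoly, aux_charmatrix_diag, Matrix.det_diagonal]

lemma aux_charpoly_conj (U D : Matrix n n ℝ) (h1 : U * star U = 1) (h2 : star U * U = 1) :
    (U * D * star U).charpoly = D.charpoly := by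
  have key : charmatrix (U * D * star U)
      = (C : ℝ →+* ℝ[X]).mapMatrix U * charmatrix D * (C : ℝ →+* ℝ[X]).mapMatrix (star U) := by
    rw [charmatrix, charmatrix, mul_sub, sub_mul]
    congr 1
    · have hs : (Matrix.scalar n (X : ℝ[X])) = (X : ℝ[X]) • (1 : Matrix n n ℝ[X]) := by
        simp [Matrix.scalar, Matrix.smul_one_eq_diagonal]
      rw [hs, mul_smul_comm, mul_one, smul_mul_assoc, ← _root_.map_mul, h1, _root_.map_one]
    · rw [← _root_.map_mul, ← _root_.map_mul]
  rw [Matrix.charpoly, Matrix.charpoly, key, Matrix.det_mul, Matrix.det_mul]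
  have hdet : ∀ M : Matrix n n ℝ, ((C : ℝ →+* ℝ[X]).mapMatrix M).det = C M.det := by
    intro M
    exact (RingHom.map_det C M).symm
  rw [hdet, hdet, mul_comm, ← mul_assoc, ← _root_.map_mul, ← Matrix.det_mul, h2]
  simp

lemma aux_roots {A : Matrix n n ℝ} (hA : A.IsHermitian) :
    A.charpoly.roots = Finset.univ.val.map hA.eigenvalues := by
  have h := hA.eigenvectorUnitary.2
  rw [Unitary.mem_iff] at h
  have hd : Matrix.diagonal (RCLike.ofReal ∘ hA.eigenvalues)
      = Matrix.diagonal hA.eigenvalues := by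
    congr 1
  conv_lhs => rw [hA.spectral_theorem, Unitary.conjStarAlgAut_apply, hd, aux_charpoly_conj _ _ h.2 h.1, aux_charpoly_diag]
  have h2 : ∏ i : n, (X - C (hA.eigenvalues i))
      = ((Finset.univ.val.map hA.eigenvalues).map (fun a => X - C a)).prod := by
    rw [Multiset.map_map]; rfl
  rw [h2, Polynomial.roots_multiset_prod_X_sub_C]

lemma lap_key {m : ℕ} (hm : 2 ≤ m) (H : SimpleGraph (Fin m)) (hH : H.Connected) :
    0 < secondSmallestEigenvalue (lapR H) ∧
    ∀ z : Fin m → ℝ, (∑ i, z i) = 0 →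
      secondSmallestEigenvalue (lapR H) ^ 2 * ∑ i, (z i) ^ 2
        ≤ ∑ i, ((lapR H) *ᵥ z) i ^ 2 := by
  classical
  letI := Classical.decRel H.Adj
  have hlapdef : lapR H = H.lapMatrix ℝ := rfl
  set L : Matrix (Fin m) (Fin m) ℝ := lapR H with hLdef
  have hpsd : L.PosSemidef := SimpleGraph.posSemidef_lapMatrix ℝ H
  have hherm := hpsd.1
  set ev := hherm.eigenvalues with hev
  set u := hherm.eigenvectorBasis with hu
  have hev0 : ∀ k, 0 ≤ ev k := fun k => hpsd.eigenvalues_nonneg k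
  have hmul : ∀ k, L *ᵥ ⇑(u k) = ev k • ⇑(u k) := fun k => hherm.mulVec_eigenvectorBasis k
  have hip : ∀ v w : EuclideanSpace ℝ (Fin m), (inner ℝ v w : ℝ) = ∑ i, v i * w i := by
    intro v w
    simp [PiLp.inner_apply, RCLike.inner_apply, starRingEnd_apply]
    exact Finset.sum_congr rfl fun _ _ => mul_comm _ _
  have horth : ∀ k l, (∑ i, u k i * u l i) = if k = l then 1 else 0 := by
    intro k l
    rw [← hip]
    exact orthonormal_iff_ite.mp u.orthonormal k l
  have hconst : ∀ v : Fin m → ℝ, L *ᵥ v = 0 → ∀ i j, v i = v j := by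
    intro v hv i j
    refine (H.lapMatrix_mulVec_eq_zero_iff_forall_reachable (x := v)).mp ?_ i j
      (hH.preconnected i j)
    exact hv
  -- the zero eigenvalue and its uniqueness
  have j0 : Fin m := ⟨0, by omega⟩
  have hker1 : L *ᵥ (fun _ => (1:ℝ)) = 0 := H.lapMatrix_mulVec_const_eq_zero
  have hdet : L.det = 0 := by
    by_contra hd
    have h0 := Matrix.eq_zero_of_mulVec_eq_zero hd hker1
    have := congrFun h0 j0
    norm_num at this
  have hexists : ∃ k, ev k = 0 := by
    have hprod : L.det = ∏ k, ev k := by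
      simpa using hherm.det_eq_prod_eigenvalues
    rw [hprod] at hdet
    obtain ⟨k, _, hk⟩ := Finset.prod_eq_zero_iff.mp hdet
    exact ⟨k, hk⟩
  obtain ⟨k0, hk0⟩ := hexists
  have huniq : ∀ k, ev k = 0 → k = k0 := by
    intro k hk
    by_contra hne
    have h1 : L *ᵥ ⇑(u k) = 0 := by rw [hmul k, hk, zero_smul]
    have h2 : L *ᵥ ⇑(u k0) = 0 := by rw [hmul k0, hk0, zero_smul]
    have hck : ∀ i, u k i = u k j0 := fun i => hconst _ h1 i j0
    have hck0 : ∀ i, u k0 i = u k0 j0 := fun i => hconst _ h2 i j0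
    have hkk : (m : ℝ) * (u k j0 * u k j0) = 1 := by
      have := horth k k
      rw [if_pos rfl] at this
      calc (m : ℝ) * (u k j0 * u k j0) = ∑ _i : Fin m, u k j0 * u k j0 := by
            rw [Finset.sum_const, Finset.card_univ, Fintype.card_fin, nsmul_eq_mul]
        _ = ∑ i, u k i * u k i := Finset.sum_congr rfl fun i _ => by rw [hck i]
        _ = 1 := this
    have hk0k0 : (m : ℝ) * (u k0 j0 * u k0 j0) = 1 := by
      have := horth k0 k0
      rw [if_pos rfl] at this
      calc (m : ℝ) * (u k0 j0 * u k0 j0) = ∑ _i : Fin m, u k0 j0 * u k0 j0 := by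
            rw [Finset.sum_const, Finset.card_univ, Fintype.card_fin, nsmul_eq_mul]
        _ = ∑ i, u k0 i * u k0 i := Finset.sum_congr rfl fun i _ => by rw [hck0 i]
        _ = 1 := this
    have hcross : (m : ℝ) * (u k j0 * u k0 j0) = 0 := by
      have := horth k k0
      rw [if_neg hne] at this
      calc (m : ℝ) * (u k j0 * u k0 j0) = ∑ _i : Fin m, u k j0 * u k0 j0 := by
            rw [Finset.sum_const, Finset.card_univ, Fintype.card_fin, nsmul_eq_mul]
        _ = ∑ i, u k i * u k0 i := Finset.sum_congr rfl fun i _ => by rw [hck i, hck0 i]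
        _ = 0 := this
    have hm0 : (0:ℝ) < (m:ℝ) := by positivity
    nlinarith [sq_nonneg (u k j0), sq_nonneg (u k0 j0)]
  -- the sorted list of roots
  have hroots : L.charpoly.roots = Finset.univ.val.map ev := aux_roots hherm
  set sr : List ℝ := L.charpoly.roots.sort (· ≤ ·) with hsrdef
  have hsorted : List.Pairwise (· ≤ ·) sr := Multiset.pairwise_sort _ _
  have hcoe : (sr : Multiset ℝ) = L.charpoly.roots := Multiset.sort_eq _ _
  have hlen : sr.length = m := by
    rw [hsrdef, Multiset.length_sort, hroots]
    simp
  have hmemev : ∀ y ∈ sr, ∃ k, ev k = y := by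
    intro y hy
    have : y ∈ L.charpoly.roots := by rw [← hcoe]; exact_mod_cast hy
    rw [hroots] at this
    obtain ⟨k, _, hk⟩ := Multiset.mem_map.mp this
    exact ⟨k, hk⟩
  have hnneg : ∀ y ∈ sr, 0 ≤ y := by
    intro y hy
    obtain ⟨k, hk⟩ := hmemev y hy
    rw [← hk]; exact hev0 k
  have hcount : sr.count 0 = 1 := by
    have hfil : Finset.filter (fun k => (0:ℝ) = ev k) Finset.univ = {k0} := by
      apply Finset.eq_singleton_iff_unique_mem.mpr
      constructor
      · simp [hk0.symm]
      · intro x hx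
        simp only [Finset.mem_filter] at hx
        exact huniq x hx.2.symm
    have : sr.count 0 = Multiset.count 0 (L.charpoly.roots) := by
      rw [← hcoe]; exact (Multiset.coe_count 0 sr).symm
    rw [this, hroots, Multiset.count_map, ← Finset.filter_val, hfil]
    rfl
  obtain ⟨a, rest, hrest⟩ : ∃ a rest, sr = a :: rest := by
    cases h : sr with
    | nil => rw [h] at hlen; simp at hlen; omega
    | cons a rest => exact ⟨a, rest, rfl⟩
  obtain ⟨b', t, hbt⟩ : ∃ b t, rest = b :: t := by
    cases h : rest with
    | nil => rw [hrest, h] at hlen; simp at hlen; omega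
    | cons b t => exact ⟨b, t, rfl⟩
  rw [hbt] at hrest
  have hsse : secondSmallestEigenvalue L = b' := by
    rw [secondSmallestEigenvalue, ← hsrdef, hrest]
    rfl
  have hmem0 : (0:ℝ) ∈ sr := by
    rw [← List.count_pos_iff, hcount]; omega
  have ha0 : a = 0 := by
    have hale : ∀ y ∈ b' :: t, a ≤ y := (List.pairwise_cons.mp (hrest ▸ hsorted)).1
    have h0a : (0:ℝ) = a ∨ (0:ℝ) ∈ b' :: t := by
      rw [hrest] at hmem0
      simpa using hmem0
    have hanneg : 0 ≤ a := hnneg a (by rw [hrest]; simp)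
    rcases h0a with h | h
    · exact h.symm
    · exact le_antisymm (hale 0 h) hanneg
  have hb'ne : b' ≠ 0 := by
    intro hb0
    rw [hrest, ha0, hb0] at hcount
    simp [List.count_cons] at hcount
  have hb'pos : 0 < b' := lt_of_le_of_ne (hnneg b' (by rw [hrest]; simp)) (Ne.symm hb'ne)
  have hlow : ∀ k, k ≠ k0 → b' ≤ ev k := by
    intro k hk
    have hevne : ev k ≠ 0 := fun h => hk (huniq k h)
    have hmemk : ev k ∈ sr := by
      have : ev k ∈ L.charpoly.roots := by
        rw [hroots]; exact Multiset.mem_map_of_mem _ (Finset.mem_univ k)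
      rw [← hcoe] at this; exact_mod_cast this
    rw [hrest] at hmemk
    rcases List.mem_cons.mp hmemk with h | h
    · exact absurd (h.trans ha0) hevne
    · rcases List.mem_cons.mp h with h2 | h2
      · rw [h2]
      · exact (List.pairwise_cons.mp (List.pairwise_cons.mp (hrest ▸ hsorted)).2).1 _ h2
  refine ⟨by rw [hsse]; exact hb'pos, ?_⟩
  -- the Rayleigh-type inequality
  intro z hz
  set zE : EuclideanSpace ℝ (Fin m) := (WithLp.equiv 2 (Fin m → ℝ)).symm z with hzE
  set wE : EuclideanSpace ℝ (Fin m) := (WithLp.equiv 2 (Fin m → ℝ)).symm (L *ᵥ z) with hwE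
  set c : Fin m → ℝ := fun k => (inner ℝ (u k) zE : ℝ) with hcdef
  have hc : ∀ k, c k = ∑ i, u k i * z i := by
    intro k
    rw [hcdef]
    exact hip (u k) zE
  have hP1 : ∑ k, c k ^ 2 = ∑ i, z i ^ 2 := by
    calc ∑ k, c k ^ 2 = ∑ k, (inner ℝ zE (u k) : ℝ) * (inner ℝ (u k) zE : ℝ) := by
          refine Finset.sum_congr rfl fun k _ => ?_
          rw [hcdef, real_inner_comm, pow_two]
      _ = (inner ℝ zE zE : ℝ) := u.sum_inner_mul_inner zE zE
      _ = ∑ i, z i ^ 2 := by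
          rw [hip]
          exact Finset.sum_congr rfl fun i _ => (pow_two _).symm
  have hw : ∀ k, (inner ℝ (u k) wE : ℝ) = ev k * c k := by
    intro k
    rw [hip]
    have hdot : ∑ i, u k i * (L *ᵥ z) i = (⇑(u k)) ⬝ᵥ (L *ᵥ z) := rfl
    have hsymm : Lᵀ = L := by
      have := hherm
      rwa [Matrix.IsHermitian, Matrix.conjTranspose_eq_transpose_of_trivial] at this
    calc ∑ i, u k i * wE i = (⇑(u k)) ⬝ᵥ (L *ᵥ z) := rfl
      _ = ((⇑(u k)) ᵥ* L) ⬝ᵥ z := Matrix.dotProduct_mulVec _ _ _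
      _ = (L *ᵥ ⇑(u k)) ⬝ᵥ z := by conv_lhs => rw [← hsymm, Matrix.vecMul_transpose]
      _ = (ev k • ⇑(u k)) ⬝ᵥ z := by rw [hmul k]
      _ = ev k * ((⇑(u k)) ⬝ᵥ z) := smul_dotProduct _ _ _
      _ = ev k * c k := by rw [hc k]; rfl
  have hP2 : ∑ k, (ev k * c k) ^ 2 = ∑ i, ((L *ᵥ z) i) ^ 2 := by
    calc ∑ k, (ev k * c k) ^ 2
        = ∑ k, (inner ℝ wE (u k) : ℝ) * (inner ℝ (u k) wE : ℝ) := by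
          refine Finset.sum_congr rfl fun k _ => ?_
          rw [real_inner_comm, hw k, pow_two]
      _ = (inner ℝ wE wE : ℝ) := u.sum_inner_mul_inner wE wE
      _ = ∑ i, ((L *ᵥ z) i) ^ 2 := by
          rw [hip]
          exact Finset.sum_congr rfl fun i _ => (pow_two _).symm
  have hc0 : c k0 = 0 := by
    have h2 : L *ᵥ ⇑(u k0) = 0 := by rw [hmul k0, hk0, zero_smul]
    have hck0 : ∀ i, u k0 i = u k0 j0 := fun i => hconst _ h2 i j0
    rw [hc k0]
    calc ∑ i, u k0 i * z i = ∑ i, u k0 j0 * z i :=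
          Finset.sum_congr rfl fun i _ => by rw [hck0 i]
      _ = u k0 j0 * ∑ i, z i := by rw [Finset.mul_sum]
      _ = 0 := by rw [hz, mul_zero]
  rw [hsse, ← hP1, ← hP2, Finset.mul_sum]
  refine Finset.sum_le_sum fun k _ => ?_
  by_cases hk : k = k0
  · rw [hk, hc0]; simp
  · have h1 := hlow k hk
    have h2 := sq_nonneg (c k)
    have hsq : b' ^ 2 ≤ ev k ^ 2 := by nlinarith
    rw [mul_pow]
    exact mul_le_mul_of_nonneg_right hsq h2

end AuxSpectral

/-- Let `H` be a connected graph on `m ≥ 2` vertices with Laplacian `L̄ = lapR H`,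
`s` a positive integer, `Δ = diag(α)` with `0 ≤ αᵢ ≤ s`, and `B = Σ αᵢ`. If `x` is a
nonnegative eigenvector for the smallest eigenvalue of `L̄ + Δ`, normalized so that its largest
component equals `1`, then every component satisfies `x i ≥ 1 - 2√(sB)/λ₂(L̄)`. -/
theorem eigenvector_component_lower_bound {m : ℕ} (hm : 2 ≤ m)
    (H : SimpleGraph (Fin m)) (hH : H.Connected)
    (s : ℕ) (hs : 0 < s) (α : Fin m → ℕ) (hα : ∀ i, α i ≤ s)
    (lam : ℝ)
    (hlam : IsSmallestEigenvalue (lapR H + Matrix.diagonal fun i => (α i : ℝ)) lam)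
    (x : Fin m → ℝ) (hx0 : x ≠ 0)
    (heig : (lapR H + Matrix.diagonal fun i => (α i : ℝ)).mulVec x = lam • x)
    (hxnn : ∀ i, 0 ≤ x i) (hxle : ∀ i, x i ≤ 1) (hxmax : ∃ i, x i = 1) :
    ∀ i, 1 - 2 * Real.sqrt ((s : ℝ) * ∑ j, (α j : ℝ)) / secondSmallestEigenvalue (lapR H)
      ≤ x i := by
  classical
  letI := Classical.decRel H.Adj
  intro i
  obtain ⟨i0, hi0⟩ := hxmax
  obtain ⟨hl2pos, hkey⟩ := lap_key hm H hH
  set B : ℝ := ∑ j, (α j : ℝ) with hB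
  set lam2 : ℝ := secondSmallestEigenvalue (lapR H) with hlam2
  have hBnn : 0 ≤ B := Finset.sum_nonneg fun j _ => by positivity
  have hsB : 0 ≤ (s : ℝ) * B := mul_nonneg (by positivity) hBnn
  have hLx : ∀ j, ((lapR H) *ᵥ x) j = (lam - (α j : ℝ)) * x j := by
    intro j
    have h := congrFun heig j
    rw [Matrix.add_mulVec] at h
    have hd : (Matrix.diagonal (fun i => ((α i : ℝ))) *ᵥ x) j = (α j : ℝ) * x j :=
      Matrix.mulVec_diagonal _ _ _
    simp only [Pi.add_apply, Pi.smul_apply, smul_eq_mul] at h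
    rw [hd] at h
    linarith
  have hT1 : (1 : ℝ) ≤ ∑ j, x j := by
    calc (1 : ℝ) = x i0 := hi0.symm
      _ ≤ ∑ j, x j := Finset.single_le_sum (fun j _ => hxnn j) (Finset.mem_univ i0)
  have hsum : ∑ j, (α j : ℝ) * x j = lam * ∑ j, x j := by
    have h0 : ∑ j, ((lapR H) *ᵥ x) j = 0 := lap_sum_mulVec H x
    rw [Finset.sum_congr rfl fun j _ => hLx j] at h0
    have h1 : ∑ j, (lam - (α j : ℝ)) * x j
        = lam * ∑ j, x j - ∑ j, (α j : ℝ) * x j := by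
      rw [Finset.mul_sum, ← Finset.sum_sub_distrib]
      exact Finset.sum_congr rfl fun j _ => by ring
    rw [h1] at h0
    linarith
  have hS2pos : (0:ℝ) < ∑ j, x j ^ 2 := by
    have : (1:ℝ) = x i0 ^ 2 := by rw [hi0]; norm_num
    calc (0:ℝ) < 1 := one_pos
      _ = x i0 ^ 2 := this
      _ ≤ ∑ j, x j ^ 2 :=
          Finset.single_le_sum (f := fun j => x j ^ 2) (fun j _ => sq_nonneg _)
            (Finset.mem_univ i0)
  have hlamnn : 0 ≤ lam := by
    have hq := (SimpleGraph.posSemidef_lapMatrix ℝ H).dotProduct_mulVec_nonneg x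
    have hqq : (0:ℝ) ≤ ∑ j, x j * ((lam - (α j : ℝ)) * x j) := by
      have hstar : star x = x := by simp
      rw [hstar] at hq
      calc (0:ℝ) ≤ x ⬝ᵥ ((lapR H) *ᵥ x) := hq
        _ = ∑ j, x j * ((lapR H) *ᵥ x) j := rfl
        _ = ∑ j, x j * ((lam - (α j : ℝ)) * x j) :=
            Finset.sum_congr rfl fun j _ => by rw [hLx j]
    have hexp : ∑ j, x j * ((lam - (α j : ℝ)) * x j)
        = lam * ∑ j, x j ^ 2 - ∑ j, (α j : ℝ) * x j ^ 2 := by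
      rw [Finset.mul_sum, ← Finset.sum_sub_distrib]
      exact Finset.sum_congr rfl fun j _ => by ring
    rw [hexp] at hqq
    have hax2 : (0:ℝ) ≤ ∑ j, (α j : ℝ) * x j ^ 2 :=
      Finset.sum_nonneg fun j _ => mul_nonneg (by positivity) (sq_nonneg _)
    nlinarith
  have hlams : lam ≤ (s : ℝ) := by
    have h1 : ∑ j, (α j : ℝ) * x j ≤ ∑ j, (s : ℝ) * x j :=
      Finset.sum_le_sum fun j _ => mul_le_mul_of_nonneg_right (by exact_mod_cast hα j) (hxnn j)
    rw [← Finset.mul_sum] at h1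
    rw [hsum] at h1
    have hTpos : (0:ℝ) < ∑ j, x j := lt_of_lt_of_le one_pos hT1
    exact le_of_mul_le_mul_right (by linarith) hTpos
  have hαxB : ∑ j, (α j : ℝ) * x j ≤ B := by
    rw [hB]
    exact Finset.sum_le_sum fun j _ => by
      calc (α j : ℝ) * x j ≤ (α j : ℝ) * 1 :=
            mul_le_mul_of_nonneg_left (hxle j) (by positivity)
        _ = (α j : ℝ) := mul_one _
  have hLx2 : ∑ j, ((lapR H) *ᵥ x) j ^ 2 ≤ 2 * s * B := by
    have hterm : ∀ j, ((lam - (α j : ℝ)) * x j) ^ 2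
        ≤ (s : ℝ) * (lam * x j + (α j : ℝ) * x j) := by
      intro j
      have h1 : (0:ℝ) ≤ (α j : ℝ) := by positivity
      have h2 : (α j : ℝ) ≤ (s : ℝ) := by exact_mod_cast hα j
      have h3 := hxnn j
      have h4 := hxle j
      have hA : (lam - (α j:ℝ))^2 ≤ (s:ℝ) * (lam + (α j:ℝ)) := by
        nlinarith [mul_nonneg hlamnn h1, mul_nonneg (sub_nonneg.mpr hlams) hlamnn,
          mul_nonneg (sub_nonneg.mpr h2) h1]
      have hx2 : x j ^ 2 ≤ x j := by nlinarith
      calc ((lam - (α j:ℝ)) * x j)^2 = (lam - (α j:ℝ))^2 * (x j)^2 := by ring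
        _ ≤ ((s:ℝ) * (lam + (α j:ℝ))) * (x j)^2 :=
            mul_le_mul_of_nonneg_right hA (sq_nonneg _)
        _ ≤ ((s:ℝ) * (lam + (α j:ℝ))) * x j :=
            mul_le_mul_of_nonneg_left hx2
              (mul_nonneg (by positivity) (add_nonneg hlamnn h1))
        _ = (s:ℝ) * (lam * x j + (α j:ℝ) * x j) := by ring
    have hsum2 : ∑ j, ((s:ℝ) * (lam * x j + (α j:ℝ) * x j))
        = (s:ℝ) * lam * (∑ j, x j) + (s:ℝ) * (∑ j, (α j:ℝ) * x j) := by
      calc ∑ j, ((s:ℝ) * (lam * x j + (α j:ℝ) * x j))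
          = ∑ j, ((s:ℝ) * lam * x j + (s:ℝ) * ((α j:ℝ) * x j)) :=
            Finset.sum_congr rfl fun j _ => by ring
        _ = (∑ j, (s:ℝ) * lam * x j) + ∑ j, (s:ℝ) * ((α j:ℝ) * x j) :=
            Finset.sum_add_distrib
        _ = (s:ℝ) * lam * (∑ j, x j) + (s:ℝ) * (∑ j, (α j:ℝ) * x j) := by
            rw [← Finset.mul_sum, ← Finset.mul_sum]
    have h5 : ∑ j, ((lapR H) *ᵥ x) j ^ 2 ≤ ∑ j, ((s:ℝ) * (lam * x j + (α j:ℝ) * x j)) := by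
      calc ∑ j, ((lapR H) *ᵥ x) j ^ 2 = ∑ j, ((lam - (α j : ℝ)) * x j) ^ 2 :=
            Finset.sum_congr rfl fun j _ => by rw [hLx j]
        _ ≤ _ := Finset.sum_le_sum fun j _ => hterm j
    have h6 : (s:ℝ) * lam * (∑ j, x j) = (s:ℝ) * ∑ j, (α j:ℝ) * x j := by
      rw [mul_assoc, ← hsum]
    have h7 : (s:ℝ) * (∑ j, (α j:ℝ) * x j) ≤ (s:ℝ) * B :=
      mul_le_mul_of_nonneg_left hαxB (by positivity)
    rw [hsum2, h6] at h5
    calc ∑ j, ((lapR H) *ᵥ x) j ^ 2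
        ≤ (s:ℝ) * (∑ j, (α j:ℝ) * x j) + (s:ℝ) * (∑ j, (α j:ℝ) * x j) := h5
      _ ≤ (s:ℝ) * B + (s:ℝ) * B := by linarith
      _ = 2 * s * B := by ring
  -- the centered vector
  have hm0 : (0:ℝ) < (m:ℝ) := by positivity
  set z : Fin m → ℝ := fun j => x j - (∑ j, x j) / m with hzdef
  have hzsum : ∑ j, z j = 0 := by
    rw [hzdef]
    rw [Finset.sum_sub_distrib, Finset.sum_const, Finset.card_univ, Fintype.card_fin,
      nsmul_eq_mul]
    field_simp
    ring
  have hLz : (lapR H) *ᵥ z = (lapR H) *ᵥ x := by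
    have hzeq : z = x - ((∑ j, x j) / m) • (fun _ => (1:ℝ)) := by
      funext j
      simp [hzdef]
    have hker : (lapR H) *ᵥ (fun _ => (1:ℝ)) = 0 := H.lapMatrix_mulVec_const_eq_zero
    rw [hzeq, Matrix.mulVec_sub, Matrix.mulVec_smul, hker, smul_zero, sub_zero]
  have hz2 : lam2 ^ 2 * ∑ j, z j ^ 2 ≤ 2 * s * B := by
    have h := hkey z hzsum
    rw [hLz] at h
    exact h.trans hLx2
  have hzb : ∑ j, z j ^ 2 ≤ 2 * s * B / lam2 ^ 2 := by
    rw [le_div_iff₀ (pow_pos hl2pos 2)]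
    calc (∑ j, z j ^ 2) * lam2 ^ 2 = lam2 ^ 2 * ∑ j, z j ^ 2 := by ring
      _ ≤ 2 * s * B := hz2
  have h1x : (1 - x i) ^ 2 ≤ 4 * s * B / lam2 ^ 2 := by
    have e1 : 1 - x i = z i0 - z i := by rw [hzdef]; simp [hi0]
    by_cases hii : i = i0
    · rw [e1, hii, sub_self]
      have : (0:ℝ) ≤ 4 * s * B / lam2 ^ 2 :=
        div_nonneg (by positivity) (pow_pos hl2pos 2).le
      nlinarith
    · have hpair : z i0 ^ 2 + z i ^ 2 ≤ ∑ j, z j ^ 2 := by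
        have hne : i0 ≠ i := Ne.symm hii
        calc z i0 ^ 2 + z i ^ 2 = ∑ j ∈ ({i0, i} : Finset (Fin m)), z j ^ 2 :=
              (Finset.sum_pair (f := fun j => z j ^ 2) hne).symm
          _ ≤ ∑ j, z j ^ 2 :=
              Finset.sum_le_sum_of_subset_of_nonneg (Finset.subset_univ _)
                (fun j _ _ => sq_nonneg _)
      have e2 : (z i0 - z i) ^ 2 ≤ 2 * (z i0 ^ 2 + z i ^ 2) := by
        nlinarith [sq_nonneg (z i0 + z i)]
      rw [e1]
      calc (z i0 - z i) ^ 2 ≤ 2 * (z i0 ^ 2 + z i ^ 2) := e2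
        _ ≤ 2 * ∑ j, z j ^ 2 := by linarith
        _ ≤ 2 * (2 * s * B / lam2 ^ 2) := by linarith
        _ = 4 * s * B / lam2 ^ 2 := by ring
  have hfin : 1 - x i ≤ 2 * Real.sqrt ((s:ℝ) * B) / lam2 := by
    have h4 : 4 * (s:ℝ) * B / lam2 ^ 2 = (2 * Real.sqrt ((s:ℝ) * B) / lam2) ^ 2 := by
      rw [div_pow, mul_pow, Real.sq_sqrt hsB]
      ring
    calc 1 - x i ≤ |1 - x i| := le_abs_self _
      _ = Real.sqrt ((1 - x i) ^ 2) := (Real.sqrt_sq_eq_abs _).symm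
      _ ≤ Real.sqrt (4 * s * B / lam2 ^ 2) := Real.sqrt_le_sqrt h1x
      _ = 2 * Real.sqrt ((s:ℝ) * B) / lam2 := by
          rw [h4, Real.sqrt_sq
            (div_nonneg (mul_nonneg (by norm_num) (Real.sqrt_nonneg _)) hl2pos.le)]
  linarith
end

section
/- Let H be a connected finite simple graph on m ≥ 2 vertices with Laplacian matrix L̄ and second-smallest Laplacian eigenvalue λ₂(L̄). Let s be a positive integer, Δ = diag(α₁,…,α_m) with integer entries 0 ≤ α_i ≤ s, and B = Σ_{i=1}^{m} α_i. Let x be a nonnegative eigenvector of L̄ + Δ for its smallest eigenvalue, normalized so its largest component equals 1, and let γ = (1/m)·Σ_{i=1}^m x_i. Then ‖x − γ·1‖₂² ≤ 2·s·B/λ₂(L̄)², where 1 is the all-ones vector. -/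
open Filter

open Polynomial Matrix in
lemma charpoly_conj_units {n : Type*} [Fintype n] [DecidableEq n] {R : Type*} [CommRing R]
    (P D Q : Matrix n n R) (hPQ : P * Q = 1) :
    (P * D * Q).charpoly = D.charpoly := by
  have key : charmatrix (P * D * Q) = P.map C * charmatrix D * Q.map C := by
    rw [charmatrix, charmatrix]
    rw [Matrix.mul_sub, Matrix.sub_mul]
    congr 1
    · rw [scalar_apply, ← Matrix.smul_one_eq_diagonal, mul_smul_comm, smul_mul_assoc, mul_one,
        ← Matrix.map_mul, hPQ, Matrix.map_one _ (map_zero C) (map_one C),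
        Matrix.smul_one_eq_diagonal]
    · simp [RingHom.mapMatrix_apply, Matrix.map_mul]
  rw [Matrix.charpoly, Matrix.charpoly, key, det_mul, det_mul, mul_right_comm,
    ← det_mul, ← Matrix.map_mul, hPQ, Matrix.map_one _ (map_zero C) (map_one C), det_one, one_mul]

open Polynomial Matrix in
lemma charpoly_roots_hermitian {m : ℕ} {A : Matrix (Fin m) (Fin m) ℝ} (hA : A.IsHermitian) :
    A.charpoly.roots = (Finset.univ.val.map hA.eigenvalues) := by
  have hsp := hA.spectral_theorem
  have hD : Matrix.diagonal (RCLike.ofReal ∘ hA.eigenvalues) = Matrix.diagonal hA.eigenvalues := by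
    congr 1
  have hUQ : (hA.eigenvectorUnitary : Matrix (Fin m) (Fin m) ℝ) *
      (star (hA.eigenvectorUnitary : Matrix (Fin m) (Fin m) ℝ)) = 1 :=
    (Matrix.mem_unitaryGroup_iff).mp (hA.eigenvectorUnitary).2
  have h1 : A.charpoly = (Matrix.diagonal hA.eigenvalues).charpoly := by
    conv_lhs => rw [hsp, hD]
    exact charpoly_conj_units _ _ _ hUQ
  rw [h1, charpoly_of_upperTriangular _ (Matrix.blockTriangular_diagonal _)]
  have : (∏ i : Fin m, (X - C ((Matrix.diagonal hA.eigenvalues) i i)))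
      = ((Finset.univ.val.map hA.eigenvalues).map fun a => X - C a).prod := by
    rw [Multiset.map_map, Finset.prod]
    congr 1
    apply Multiset.map_congr rfl
    intro i _
    simp
  rw [this, roots_multiset_prod_X_sub_C]

open Matrix in
lemma eigen_dot_decomp {m : ℕ} {A : Matrix (Fin m) (Fin m) ℝ} (hA : A.IsHermitian)
    (y : Fin m → ℝ) :
    y ⬝ᵥ y = ∑ k, (∑ j, hA.eigenvectorBasis k j * y j) ^ 2 ∧
    (A *ᵥ y) ⬝ᵥ (A *ᵥ y) =
      ∑ k, (hA.eigenvalues k) ^ 2 * (∑ j, hA.eigenvectorBasis k j * y j) ^ 2 ∧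
    y ⬝ᵥ (A *ᵥ y) = ∑ k, (hA.eigenvalues k) * (∑ j, hA.eigenvectorBasis k j * y j) ^ 2 := by
  set P : Matrix (Fin m) (Fin m) ℝ := (hA.eigenvectorUnitary : Matrix (Fin m) (Fin m) ℝ) with hPdef
  have hstar : star P = Pᵀ := by
    rw [Matrix.star_eq_conjTranspose, Matrix.conjTranspose_eq_transpose_of_trivial]
  have hP1 : P * Pᵀ = 1 := by
    rw [← hstar]; exact (Matrix.mem_unitaryGroup_iff).mp (hA.eigenvectorUnitary).2
  have hP2 : Pᵀ * P = 1 := by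
    rw [← hstar]; exact (Matrix.mem_unitaryGroup_iff').mp (hA.eigenvectorUnitary).2
  set c : Fin m → ℝ := Pᵀ *ᵥ y with hcdef
  have hkey : ∀ a b : Fin m → ℝ, (P *ᵥ a) ⬝ᵥ (P *ᵥ b) = a ⬝ᵥ b := by
    intro a b
    rw [Matrix.dotProduct_mulVec, ← Matrix.vecMul_transpose P a, Matrix.vecMul_vecMul,
      hP2, Matrix.vecMul_one]
  have hy : y = P *ᵥ c := by rw [hcdef, Matrix.mulVec_mulVec, hP1, Matrix.one_mulVec]
  have hc : ∀ k, c k = ∑ j, hA.eigenvectorBasis k j * y j := by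
    intro k
    simp only [hcdef, Matrix.mulVec, dotProduct, Matrix.transpose_apply]
    rfl
  have hAy : A *ᵥ y = P *ᵥ (Matrix.diagonal hA.eigenvalues *ᵥ c) := by
    have hD : Matrix.diagonal (RCLike.ofReal ∘ hA.eigenvalues) =
        Matrix.diagonal hA.eigenvalues := by congr 1
    conv_lhs => rw [hA.spectral_theorem, hD, Unitary.conjStarAlgAut_apply, ← hPdef, hstar]
    simp only [hcdef, Matrix.mulVec_mulVec, Matrix.mul_assoc]
  have h1 : y ⬝ᵥ y = ∑ k, c k ^ 2 := by
    conv_lhs => rw [hy]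
    rw [hkey]
    simp only [dotProduct, sq]
  have h2 : (A *ᵥ y) ⬝ᵥ (A *ᵥ y) = ∑ k, (hA.eigenvalues k) ^ 2 * c k ^ 2 := by
    rw [hAy, hkey]
    simp only [dotProduct, Matrix.mulVec_diagonal]
    exact Finset.sum_congr rfl fun k _ => by ring
  have h3 : y ⬝ᵥ (A *ᵥ y) = ∑ k, (hA.eigenvalues k) * c k ^ 2 := by
    rw [hAy]
    nth_rewrite 1 [hy]
    rw [hkey]
    simp only [dotProduct, Matrix.mulVec_diagonal]
    exact Finset.sum_congr rfl fun k _ => by ring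
  refine ⟨?_, ?_, ?_⟩
  · rw [h1]; exact Finset.sum_congr rfl fun k _ => by rw [hc]
  · rw [h2]; exact Finset.sum_congr rfl fun k _ => by rw [hc]
  · rw [h3]; exact Finset.sum_congr rfl fun k _ => by rw [hc]

lemma sorted_second_facts (l : List ℝ) (hs : l.Pairwise (· ≤ ·)) (h2 : 2 ≤ l.length)
    (hnn : ∀ a ∈ l, 0 ≤ a) (h0 : (0:ℝ) ∈ l) (hc : l.count 0 = 1) :
    0 < l.getD 1 0 ∧ ∀ a ∈ l, a ≠ 0 → l.getD 1 0 ≤ a := by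
  rcases l with _ | ⟨a, _ | ⟨b, t⟩⟩
  · simp at h2
  · simp at h2
  · rw [List.pairwise_cons] at hs
    obtain ⟨ha_le, hs'⟩ := hs
    rw [List.pairwise_cons] at hs'
    obtain ⟨hb_le, _⟩ := hs'
    have hgetD : (a :: b :: t).getD 1 0 = b := rfl
    have ha0 : a = 0 := by
      refine le_antisymm ?_ (hnn a (by simp))
      rcases List.mem_cons.mp h0 with h | h
      · exact le_of_eq h.symm
      · exact ha_le 0 h
    have hbne : b ≠ 0 := by
      intro hb0
      rw [List.count_cons, List.count_cons, ha0, hb0] at hc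
      simp at hc
    have hbpos : 0 < b := lt_of_le_of_ne (hnn b (by simp)) (Ne.symm hbne)
    rw [hgetD]
    refine ⟨hbpos, ?_⟩
    intro a' ha' hne
    rcases List.mem_cons.mp ha' with h | h
    · exact absurd (h.trans ha0) hne
    · rcases List.mem_cons.mp h with h' | h'
      · exact le_of_eq h'.symm
      · exact hb_le a' h'





open Matrix in
lemma eigenvectorBasis_coe_ne_zero {m : ℕ} {A : Matrix (Fin m) (Fin m) ℝ} (hA : A.IsHermitian)
    (k : Fin m) : (fun i => hA.eigenvectorBasis k i) ≠ (0 : Fin m → ℝ) := by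
  intro h
  have hz : hA.eigenvectorBasis k = 0 := by
    ext i
    exact congrFun h i
  have := hA.eigenvectorBasis.orthonormal.1 k
  rw [hz] at this
  simp at this

open Matrix in
lemma lap_kernel_const {m : ℕ} (H : SimpleGraph (Fin m)) (hH : H.Connected)
    (v : Fin m → ℝ) (hv : lapR H *ᵥ v = 0) : ∀ i j, v i = v j := by
  letI := Classical.decRel H.Adj
  intro i j
  have h := (SimpleGraph.lapMatrix_mulVec_eq_zero_iff_forall_reachable H (x := v)).mp
    (by exact hv)
  exact h i j (hH.preconnected i j)

open Matrix in
lemma secondSmallest_facts {m : ℕ} (hm : 2 ≤ m) (H : SimpleGraph (Fin m)) (hH : H.Connected)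
    (hL : (lapR H).IsHermitian) :
    0 < secondSmallestEigenvalue (lapR H) ∧
    ∀ k, hL.eigenvalues k ≠ 0 → secondSmallestEigenvalue (lapR H) ≤ hL.eigenvalues k := by
  letI := Classical.decRel H.Adj
  have hpsd : (lapR H).PosSemidef := SimpleGraph.posSemidef_lapMatrix ℝ H
  have hnn : ∀ k, 0 ≤ hL.eigenvalues k := fun k => hpsd.eigenvalues_nonneg k
  -- there is an index with eigenvalue zero
  have hdet : (lapR H).det = 0 := by
    rw [← Matrix.exists_mulVec_eq_zero_iff]
    refine ⟨fun _ => 1, ?_, SimpleGraph.lapMatrix_mulVec_const_eq_zero H⟩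
    intro h
    have : (1:ℝ) = 0 := congrFun h ⟨0, by omega⟩
    norm_num at this
  have hex : ∃ i, hL.eigenvalues i = 0 := by
    have := hL.det_eq_prod_eigenvalues
    rw [hdet] at this
    obtain ⟨i, -, hi⟩ := Finset.prod_eq_zero_iff.mp this.symm
    exact ⟨i, by exact_mod_cast hi⟩
  -- uniqueness of the zero eigenvalue index
  have huniq : ∀ i j, hL.eigenvalues i = 0 → hL.eigenvalues j = 0 → i = j := by
    intro i j hi hj
    by_contra hij
    have hvi : lapR H *ᵥ (fun a => hL.eigenvectorBasis i a) = 0 := by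
      have := hL.mulVec_eigenvectorBasis i
      rw [hi, zero_smul] at this
      exact this
    have hvj : lapR H *ᵥ (fun a => hL.eigenvectorBasis j a) = 0 := by
      have := hL.mulVec_eigenvectorBasis j
      rw [hj, zero_smul] at this
      exact this
    have hci := lap_kernel_const H hH _ hvi
    have hcj := lap_kernel_const H hH _ hvj
    have horth : (inner ℝ (hL.eigenvectorBasis i) (hL.eigenvectorBasis j) : ℝ) = 0 :=
      hL.eigenvectorBasis.orthonormal.2 hij
    rw [PiLp.inner_apply] at horth
    simp only [RCLike.inner_apply, starRingEnd_apply, star_trivial] at horth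
    set i0 : Fin m := ⟨0, by omega⟩
    have hsum : ∑ a, hL.eigenvectorBasis i a * hL.eigenvectorBasis j a
        = (m : ℝ) * (hL.eigenvectorBasis i i0 * hL.eigenvectorBasis j i0) := by
      rw [Finset.sum_congr rfl (fun a _ => by rw [hci a i0, hcj a i0])]
      simp [mul_comm]
    rw [show (∑ x, hL.eigenvectorBasis j x * hL.eigenvectorBasis i x) = ∑ a, hL.eigenvectorBasis i a * hL.eigenvectorBasis j a from Finset.sum_congr rfl fun a _ => mul_comm _ _, hsum] at horth
    have hm0 : (0:ℝ) < m := by positivity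
    rcases mul_eq_zero.mp ((mul_eq_zero.mp horth).resolve_left (ne_of_gt hm0)) with h | h
    · exact eigenvectorBasis_coe_ne_zero hL i (funext fun a => by rw [hci a i0, h]; rfl)
    · exact eigenvectorBasis_coe_ne_zero hL j (funext fun a => by rw [hcj a i0, h]; rfl)
  -- translate to the sorted list of roots
  have hroots := charpoly_roots_hermitian hL
  set l : List ℝ := (lapR H).charpoly.roots.sort (· ≤ ·) with hldef
  have hsorted : l.Pairwise (· ≤ ·) := (lapR H).charpoly.roots.pairwise_sort _
  have hlcoe : (l : Multiset ℝ) = (lapR H).charpoly.roots := (lapR H).charpoly.roots.sort_eq _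
  have hlen : l.length = m := by
    rw [hldef, Multiset.length_sort, hroots, Multiset.card_map]
    simp
  have hmem : ∀ a : ℝ, a ∈ l ↔ ∃ i, hL.eigenvalues i = a := by
    intro a
    rw [← Multiset.mem_coe, hlcoe, hroots, Multiset.mem_map]
    simp
  have hcount : l.count 0 = 1 := by
    have : (l : Multiset ℝ).count 0 = 1 := by
      rw [hlcoe, hroots, Multiset.count_map]
      obtain ⟨i₀, hi₀⟩ := hex
      have : Multiset.filter (fun a => 0 = hL.eigenvalues a) Finset.univ.val
          = ({i₀} : Finset (Fin m)).val := by
        rw [show Multiset.filter (fun a => 0 = hL.eigenvalues a) Finset.univ.val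
            = (Finset.filter (fun a => 0 = hL.eigenvalues a) Finset.univ).val from rfl]
        congr 1
        ext j
        simp only [Finset.mem_filter, Finset.mem_univ, true_and, Finset.mem_singleton]
        constructor
        · intro h; exact huniq j i₀ h.symm hi₀
        · intro h; rw [h, hi₀]
      rw [this]
      simp
    rwa [Multiset.coe_count] at this
  have h0mem : (0:ℝ) ∈ l := by
    rw [hmem]
    exact hex
  have hnnl : ∀ a ∈ l, 0 ≤ a := by
    intro a ha
    obtain ⟨i, hi⟩ := (hmem a).mp ha
    rw [← hi]; exact hnn i
  have key := sorted_second_facts l hsorted (by omega) hnnl h0mem hcount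
  refine ⟨key.1, fun k hk => key.2 _ ((hmem _).mpr ⟨k, rfl⟩) hk⟩

set_option maxHeartbeats 1000000 in
open Matrix in
/-- With the setup of Lemma 2 (connected `H` on `m ≥ 2` vertices, `Δ = diag(α)`
with `0 ≤ αᵢ ≤ s`, `B = Σ αᵢ`, and `x` a nonnegative eigenvector of `L̄ + Δ` for its smallest
eigenvalue with largest component `1`), letting `γ` be the average of the components of `x`,
the squared Euclidean norm of `x - γ·𝟏` is at most `2sB/λ₂(L̄)²`. -/
theorem eigenvector_projection_bound {m : ℕ} (hm : 2 ≤ m)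
    (H : SimpleGraph (Fin m)) (hH : H.Connected)
    (s : ℕ) (hs : 0 < s) (α : Fin m → ℕ) (hα : ∀ i, α i ≤ s)
    (lam : ℝ)
    (hlam : IsSmallestEigenvalue (lapR H + Matrix.diagonal fun i => (α i : ℝ)) lam)
    (x : Fin m → ℝ) (hx0 : x ≠ 0)
    (heig : (lapR H + Matrix.diagonal fun i => (α i : ℝ)).mulVec x = lam • x)
    (hxnn : ∀ i, 0 ≤ x i) (hxle : ∀ i, x i ≤ 1) (hxmax : ∃ i, x i = 1) :
    ∑ i, (x i - (∑ j, x j) / (m : ℝ)) ^ 2 ≤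
      2 * (s : ℝ) * (∑ j, (α j : ℝ)) / (secondSmallestEigenvalue (lapR H)) ^ 2 := by
  letI := Classical.decRel H.Adj
  have hm0 : (0:ℝ) < m := by exact_mod_cast Nat.lt_of_lt_of_le Nat.zero_lt_two hm
  have hLpsd : (lapR H).PosSemidef := SimpleGraph.posSemidef_lapMatrix ℝ H
  have hL : (lapR H).IsHermitian := hLpsd.1
  set Δ : Matrix (Fin m) (Fin m) ℝ := Matrix.diagonal (fun i => (α i : ℝ)) with hΔdef
  have hMherm : (lapR H + Δ).IsHermitian := hL.add (Matrix.isHermitian_diagonal _)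
  have hMpsd : (lapR H + Δ).PosSemidef :=
    hLpsd.add (Matrix.PosSemidef.diagonal (fun i => by positivity))
  set B : ℝ := ∑ j, (α j : ℝ) with hBdef
  have hBnn : 0 ≤ B := Finset.sum_nonneg fun j _ => by positivity
  have hBsm : B ≤ (s:ℝ) * m := by
    calc B ≤ ∑ _j : Fin m, (s:ℝ) := Finset.sum_le_sum (fun j _ => by exact_mod_cast hα j)
    _ = (s:ℝ) * m := by simp [mul_comm]
  obtain ⟨i1, hi1⟩ := hxmax
  have hxdot : (1:ℝ) ≤ x ⬝ᵥ x := by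
    have h1 : (1:ℝ) = x i1 * x i1 := by rw [hi1]; ring
    rw [h1]
    exact Finset.single_le_sum (f := fun i => x i * x i)
      (fun i _ => mul_self_nonneg _) (Finset.mem_univ i1)
  have hlam0 : 0 ≤ lam := by
    have h1 : x ⬝ᵥ ((lapR H + Δ) *ᵥ x) = lam * (x ⬝ᵥ x) := by
      rw [heig, dotProduct_smul, smul_eq_mul]
    have h2 : 0 ≤ x ⬝ᵥ ((lapR H + Δ) *ᵥ x) := by
      have := hMpsd.dotProduct_mulVec_nonneg x
      rwa [star_trivial] at this
    nlinarith
  have hL1 : lapR H *ᵥ (fun _ => (1:ℝ)) = 0 := SimpleGraph.lapMatrix_mulVec_const_eq_zero H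
  have hones : (lapR H + Δ) *ᵥ (fun _ => (1:ℝ)) = fun i => (α i : ℝ) := by
    rw [Matrix.add_mulVec, hL1]
    funext i
    simp [hΔdef, Matrix.mulVec_diagonal]
  have hdec1 := eigen_dot_decomp hMherm (fun _ => (1:ℝ))
  have hlamle : lam * m ≤ B := by
    have hmu : ∀ k, lam ≤ hMherm.eigenvalues k := by
      intro k
      exact hlam.2 _ ⟨fun i => hMherm.eigenvectorBasis k i,
        eigenvectorBasis_coe_ne_zero hMherm k, hMherm.mulVec_eigenvectorBasis k⟩
    have h11 : ((fun _ => (1:ℝ)) : Fin m → ℝ) ⬝ᵥ (fun _ => (1:ℝ)) = (m:ℝ) := by simp [dotProduct]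
    have hsum1 : (fun _ => (1:ℝ)) ⬝ᵥ ((lapR H + Δ) *ᵥ fun _ => (1:ℝ)) = B := by
      rw [hones]; simp [dotProduct, hBdef]
    calc lam * m = lam * ((fun _ => (1:ℝ)) ⬝ᵥ (fun _ => (1:ℝ))) := by rw [h11]
    _ = ∑ k, lam * (∑ j, hMherm.eigenvectorBasis k j * 1) ^ 2 := by
        rw [hdec1.1, Finset.mul_sum]
    _ ≤ ∑ k, hMherm.eigenvalues k * (∑ j, hMherm.eigenvectorBasis k j * 1) ^ 2 :=
        Finset.sum_le_sum fun k _ => mul_le_mul_of_nonneg_right (hmu k) (sq_nonneg _)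
    _ = B := by rw [← hdec1.2.2, hsum1]
  obtain ⟨hl2pos, hl2le⟩ := secondSmallest_facts hm H hH hL
  set lam2 := secondSmallestEigenvalue (lapR H) with hlam2def
  set γ : ℝ := (∑ j, x j) / (m:ℝ) with hγdef
  set y : Fin m → ℝ := fun i => x i - γ with hydef
  have hsumy : ∑ i, y i = 0 := by
    simp only [hydef, Finset.sum_sub_distrib, Finset.sum_const, Finset.card_univ,
      Fintype.card_fin, nsmul_eq_mul, hγdef]
    field_simp
    ring
  have hLy : lapR H *ᵥ y = fun i => lam * x i - (α i : ℝ) * x i := by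
    have hyx : y = x - γ • (fun _ => (1:ℝ)) := funext fun i => by simp [hydef]
    rw [hyx, Matrix.mulVec_sub, Matrix.mulVec_smul, hL1, smul_zero, sub_zero]
    have hLx : lapR H *ᵥ x = lam • x - Δ *ᵥ x := by
      have h := heig
      rw [Matrix.add_mulVec] at h
      exact eq_sub_of_add_eq h
    rw [hLx]
    funext i
    simp [hΔdef, Matrix.mulVec_diagonal]
  have hdec := eigen_dot_decomp hL y
  have hczero : ∀ k, hL.eigenvalues k = 0 → ∑ j, hL.eigenvectorBasis k j * y j = 0 := by
    intro k hk
    have hv : lapR H *ᵥ (fun a => hL.eigenvectorBasis k a) = 0 := by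
      have h := hL.mulVec_eigenvectorBasis k
      rw [hk, zero_smul] at h
      exact h
    have hconst := lap_kernel_const H hH _ hv
    have i0 : Fin m := ⟨0, by omega⟩
    calc ∑ j, hL.eigenvectorBasis k j * y j = ∑ j, hL.eigenvectorBasis k i0 * y j :=
      Finset.sum_congr rfl fun j _ => by rw [hconst j i0]
    _ = hL.eigenvectorBasis k i0 * ∑ j, y j := by rw [Finset.mul_sum]
    _ = 0 := by rw [hsumy, mul_zero]
  have hspec : lam2 ^ 2 * (y ⬝ᵥ y) ≤ (lapR H *ᵥ y) ⬝ᵥ (lapR H *ᵥ y) := by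
    rw [hdec.1, hdec.2.1, Finset.mul_sum]
    apply Finset.sum_le_sum
    intro k _
    by_cases hk : hL.eigenvalues k = 0
    · rw [hczero k hk]
      simp
    · have h := hl2le k hk
      have h2 : lam2 ^ 2 ≤ hL.eigenvalues k ^ 2 := by nlinarith
      nlinarith [sq_nonneg (∑ j, hL.eigenvectorBasis k j * y j)]
  have hysq : y ⬝ᵥ y = ∑ i, (x i - γ) ^ 2 := by
    simp [dotProduct, hydef, sq]
  have hxsq : ∑ i, x i ^ 2 ≤ (m:ℝ) := by
    have h1 : ∀ i : Fin m, x i ^ 2 ≤ 1 := fun i => by nlinarith [hxnn i, hxle i]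
    have h2 : ∑ i, x i ^ 2 ≤ ∑ _i : Fin m, (1:ℝ) := Finset.sum_le_sum fun i _ => h1 i
    simpa using h2
  have hbound1 : lam ^ 2 * ∑ i, x i ^ 2 ≤ (s:ℝ) * B := by
    have e1 : lam ^ 2 * ∑ i, x i ^ 2 ≤ lam ^ 2 * m :=
      mul_le_mul_of_nonneg_left hxsq (sq_nonneg lam)
    have e2 : lam ^ 2 * m * m ≤ (s:ℝ) * B * m := by
      have e3 : lam * m ≤ B := hlamle
      have e4 : (lam * m) * (lam * m) ≤ B * B :=
        mul_self_le_mul_self (by positivity) e3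
      have e5 : B * B ≤ ((s:ℝ) * m) * B := mul_le_mul_of_nonneg_right hBsm hBnn
      nlinarith
    have e6 : lam ^ 2 * m ≤ (s:ℝ) * B := le_of_mul_le_mul_right e2 hm0
    linarith
  have hbound2 : ∑ i, (α i : ℝ) ^ 2 * x i ^ 2 ≤ (s:ℝ) * B := by
    have hterm : ∀ i : Fin m, (α i : ℝ) ^ 2 * x i ^ 2 ≤ (s:ℝ) * (α i : ℝ) := by
      intro i
      have ha : (α i : ℝ) ≤ (s:ℝ) := by exact_mod_cast hα i
      have ha0 : (0:ℝ) ≤ (α i : ℝ) := by positivity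
      have hx2 : x i ^ 2 ≤ 1 := by nlinarith [hxnn i, hxle i]
      have hb1 : (α i : ℝ) ^ 2 * x i ^ 2 ≤ (α i : ℝ) ^ 2 := by
        nlinarith [sq_nonneg ((α i : ℝ))]
      have hb2 : (α i : ℝ) ^ 2 ≤ (s:ℝ) * (α i : ℝ) := by nlinarith
      linarith
    have h2 : ∑ i, (α i : ℝ) ^ 2 * x i ^ 2 ≤ ∑ i, (s:ℝ) * (α i : ℝ) :=
      Finset.sum_le_sum fun i _ => hterm i
    rw [hBdef, Finset.mul_sum]
    exact h2
  have hLy2 : (lapR H *ᵥ y) ⬝ᵥ (lapR H *ᵥ y) ≤ 2 * (s:ℝ) * B := by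
    rw [hLy]
    have : ∀ i : Fin m, (lam * x i - (α i : ℝ) * x i) * (lam * x i - (α i : ℝ) * x i)
        ≤ lam ^ 2 * x i ^ 2 + (α i : ℝ) ^ 2 * x i ^ 2 := by
      intro i
      have ha0 : (0:ℝ) ≤ (α i : ℝ) := by positivity
      nlinarith [mul_nonneg (mul_nonneg hlam0 ha0) (sq_nonneg (x i)), sq_nonneg (x i)]
    calc (fun i => lam * x i - (α i : ℝ) * x i) ⬝ᵥ (fun i => lam * x i - (α i : ℝ) * x i)
        = ∑ i, (lam * x i - (α i : ℝ) * x i) * (lam * x i - (α i : ℝ) * x i) := rfl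
    _ ≤ ∑ i, (lam ^ 2 * x i ^ 2 + (α i : ℝ) ^ 2 * x i ^ 2) :=
        Finset.sum_le_sum fun i _ => this i
    _ = lam ^ 2 * ∑ i, x i ^ 2 + ∑ i, (α i : ℝ) ^ 2 * x i ^ 2 := by
        rw [Finset.sum_add_distrib, Finset.mul_sum]
    _ ≤ (s:ℝ) * B + (s:ℝ) * B := add_le_add hbound1 hbound2
    _ = 2 * (s:ℝ) * B := by ring
  have hfinal : lam2 ^ 2 * ∑ i, (x i - γ) ^ 2 ≤ 2 * (s:ℝ) * B := by
    rw [← hysq]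
    exact le_trans hspec hLy2
  have hpos2 : (0:ℝ) < lam2 ^ 2 := by positivity
  rw [le_div_iff₀ hpos2]
  linarith
end

section
/- Let G be a finite simple graph on n vertices and S a nonempty proper subset of its vertices such that the subgraph induced on V∖S is connected. Then the smallest eigenvalue of the grounded Laplacian L_g(S) is a simple eigenvalue, and every nonzero eigenvector corresponding to it has all components of one strict sign; in particular it admits an eigenvector with all components strictly positive, unique up to positive scaling when normalized so that its largest component equals 1. -/
open Filter

open Finset Matrix

lemma quad_sum {m : Type*} [Fintype m] (M : Matrix m m ℝ) (x : m → ℝ) :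
    x ⬝ᵥ M *ᵥ x = ∑ p : m × m, x p.1 * M p.1 p.2 * x p.2 := by
  rw [Fintype.sum_prod_type]
  simp only [dotProduct, mulVec, Finset.mul_sum]
  exact Finset.sum_congr rfl fun i _ => Finset.sum_congr rfl fun j _ => by ring

lemma term_nonneg {m : Type*} [Fintype m] (M : Matrix m m ℝ)
    (hoff : ∀ i j : m, i ≠ j → M i j ≤ 0) (x : m → ℝ) (p : m × m) :
    0 ≤ x p.1 * M p.1 p.2 * x p.2 - |x p.1| * M p.1 p.2 * |x p.2| := by
  by_cases hp : p.1 = p.2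
  · have h2 : |x p.1| * |x p.2| = x p.1 * x p.2 := by rw [hp]; exact abs_mul_abs_self _
    have heq : |x p.1| * M p.1 p.2 * |x p.2| = x p.1 * M p.1 p.2 * x p.2 := by
      linear_combination M p.1 p.2 * h2
    linarith
  · have hM := hoff _ _ hp
    have habs : x p.1 * x p.2 ≤ |x p.1| * |x p.2| := by
      rw [← abs_mul]; exact le_abs_self _
    nlinarith [hM, habs]

lemma walk_prop {α : Type*} {H : SimpleGraph α} (P : α → Prop)
    (hP : ∀ i j, H.Adj i j → P i → P j) : ∀ {i j : α} (_ : H.Walk i j), P i → P j := by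
  intro i j w
  induction w with
  | nil => exact id
  | cons h _ ih => exact fun hi => ih (hP _ _ h hi)

/-- If the subgraph induced on the non-grounded vertices is connected, then the
smallest eigenvalue of the grounded Laplacian is simple (its eigenvectors are all proportional),
every nonzero eigenvector for it has all components of one strict sign, and there is a unique
eigenvector with all components strictly positive whose largest component equals `1`. -/
theorem grounded_laplacian_perron {n : ℕ} (G : SimpleGraph (Fin n))
    (S : Finset (Fin n)) (hS : S.Nonempty) (hSp : S ⊂ Finset.univ)
    (hind : (inducedSub G S).Connected)
    (lam : ℝ) (hlam : IsSmallestEigenvalue (groundedLaplacian G S) lam) :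
    (∀ x y : {v : Fin n // v ∉ S} → ℝ, x ≠ 0 →
      (groundedLaplacian G S).mulVec x = lam • x →
      (groundedLaplacian G S).mulVec y = lam • y → ∃ a : ℝ, y = a • x) ∧
    (∀ x : {v : Fin n // v ∉ S} → ℝ, x ≠ 0 →
      (groundedLaplacian G S).mulVec x = lam • x →
      (∀ i, 0 < x i) ∨ (∀ i, x i < 0)) ∧
    (∃! x : {v : Fin n // v ∉ S} → ℝ,
      (∀ i, 0 < x i) ∧ (∀ i, x i ≤ 1) ∧ (∃ i, x i = 1) ∧
      (groundedLaplacian G S).mulVec x = lam • x) := by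
  classical
  set m := {v : Fin n // v ∉ S}
  set L : Matrix m m ℝ := groundedLaplacian G S with hLdef
  set M : Matrix m m ℝ := L - lam • 1 with hMdef
  -- index type is nonempty
  obtain ⟨v0, _, hv0⟩ := Finset.exists_of_ssubset hSp
  haveI : Nonempty m := ⟨⟨v0, hv0⟩⟩
  -- entries
  have hLij : ∀ i j : m, i ≠ j →
      L i j = if G.Adj i.val j.val then (-1 : ℝ) else 0 := by
    intro i j hij
    have hval : (i : Fin n) ≠ (j : Fin n) := fun h => hij (Subtype.ext h)
    simp [hLdef, groundedLaplacian, lapR, SimpleGraph.lapMatrix, SimpleGraph.degMatrix,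
      SimpleGraph.adjMatrix, Matrix.sub_apply, Matrix.diagonal_apply_ne _ hval, hval]
    split_ifs <;> norm_num
  have hMij : ∀ i j : m, i ≠ j → M i j = L i j := by
    intro i j hij
    simp [hMdef, Matrix.sub_apply, Matrix.one_apply_ne hij]
  have hoff : ∀ i j : m, i ≠ j → M i j ≤ 0 := by
    intro i j hij
    rw [hMij i j hij, hLij i j hij]
    split <;> norm_num
  have hadjM : ∀ i j : m, (inducedSub G S).Adj i j → M i j = -1 := by
    intro i j hij
    have hadj : G.Adj i.val j.val := hij
    have hne : i ≠ j := by
      intro h; exact G.irrefl (h ▸ hadj)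
    rw [hMij i j hne, hLij i j hne, if_pos hadj]
  -- equivalence of eigen-equations
  have hMx : ∀ x : m → ℝ, (M *ᵥ x = 0 ↔ L *ᵥ x = lam • x) := by
    intro x
    rw [hMdef, Matrix.sub_mulVec, Matrix.smul_mulVec, Matrix.one_mulVec, sub_eq_zero]
  -- hermitian
  have hLsymm : L.IsHermitian := by
    have : (lapR G).IsHermitian := by
      rw [Matrix.IsHermitian, Matrix.conjTranspose_eq_transpose_of_trivial]
      exact SimpleGraph.isSymm_lapMatrix (R := ℝ) (G := G)
    exact this.submatrix _
  have hMherm : M.IsHermitian := by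
    have h1 : (lam • (1 : Matrix m m ℝ)).IsHermitian := by
      simp [Matrix.IsHermitian]
    exact hLsymm.sub h1
  -- positive semidefinite
  have hPSD : M.PosSemidef := by
    refine hMherm.posSemidef_iff_eigenvalues_nonneg.mpr fun i => ?_
    have heig := hMherm.mulVec_eigenvectorBasis i
    set u : m → ℝ := ⇑(hMherm.eigenvectorBasis i) with hu
    have hune : u ≠ 0 := by
      intro h
      have : hMherm.eigenvectorBasis i = 0 := by
        ext j; exact congrFun h j
      have hnorm := (hMherm.eigenvectorBasis.orthonormal).1 i
      rw [this, norm_zero] at hnorm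
      norm_num at hnorm
    have hLu : L *ᵥ u = (hMherm.eigenvalues i + lam) • u := by
      have hsplit : L *ᵥ u = M *ᵥ u + lam • u := by
        rw [hMdef, Matrix.sub_mulVec, Matrix.smul_mulVec, Matrix.one_mulVec]
        exact (sub_add_cancel _ _).symm
      rw [hsplit, heig, add_smul]
    have := hlam.2 (hMherm.eigenvalues i + lam) ⟨u, hune, hLu⟩
    show (0:ℝ) ≤ hMherm.eigenvalues i
    linarith
  have hq_nonneg : ∀ x : m → ℝ, 0 ≤ x ⬝ᵥ M *ᵥ x := by
    intro x
    simpa using hPSD.dotProduct_mulVec_nonneg x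
  have hq_zero : ∀ x : m → ℝ, x ⬝ᵥ M *ᵥ x = 0 ↔ M *ᵥ x = 0 := by
    intro x
    simpa using hPSD.dotProduct_mulVec_zero_iff x
  -- |x| is an eigenvector too, and adjacent products agree with abs
  have key_abs : ∀ x : m → ℝ, M *ᵥ x = 0 →
      M *ᵥ (fun i => |x i|) = 0 ∧
      ∀ i j : m, (inducedSub G S).Adj i j → x i * x j = |x i| * |x j| := by
    intro x hx
    have hqx : x ⬝ᵥ M *ᵥ x = 0 := by rw [hx]; simp
    have hsum : ∑ p : m × m, (x p.1 * M p.1 p.2 * x p.2 - |x p.1| * M p.1 p.2 * |x p.2|)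
        = x ⬝ᵥ M *ᵥ x - (fun i => |x i|) ⬝ᵥ M *ᵥ (fun i => |x i|) := by
      rw [Finset.sum_sub_distrib, quad_sum M x, quad_sum M (fun i => |x i|)]
    have hle : (fun i => |x i|) ⬝ᵥ M *ᵥ (fun i => |x i|) ≤ x ⬝ᵥ M *ᵥ x := by
      have := Finset.sum_nonneg (s := (Finset.univ : Finset (m × m))) (fun p _ => term_nonneg M hoff x p)
      rw [hsum] at this
      linarith
    have hqa : (fun i => |x i|) ⬝ᵥ M *ᵥ (fun i => |x i|) = 0 :=
      le_antisymm (le_of_le_of_eq hle hqx) (hq_nonneg _)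
    refine ⟨(hq_zero _).mp hqa, ?_⟩
    have hzero : ∑ p : m × m, (x p.1 * M p.1 p.2 * x p.2 - |x p.1| * M p.1 p.2 * |x p.2|) = 0 := by
      rw [hsum, hqx, hqa, sub_zero]
    have hterm := (Finset.sum_eq_zero_iff_of_nonneg
      (fun p _ => term_nonneg M hoff x p)).mp hzero
    intro i j hij
    have ht := hterm (i, j) (Finset.mem_univ _)
    have hMval : M i j = -1 := hadjM i j hij
    simp only [hMval] at ht
    nlinarith [ht]
  -- positivity of nonzero nonnegative null vectors
  have pos_of_nonneg : ∀ z : m → ℝ, M *ᵥ z = 0 → (∀ i, 0 ≤ z i) → z ≠ 0 → ∀ i, 0 < z i := by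
    intro z hz hnn hne i
    rcases Function.ne_iff.mp hne with ⟨i0, hi0⟩
    have hzi0 : 0 < z i0 := lt_of_le_of_ne (hnn i0) (Ne.symm hi0)
    -- the property "z · > 0" propagates along edges from i0
    have hstep : ∀ a b : m, (inducedSub G S).Adj a b → 0 < z a → 0 < z b := by
      intro a b hab hza
      by_contra hzb
      have hzb0 : z b = 0 := le_antisymm (not_lt.mp hzb) (hnn b)
      -- row b of M *ᵥ z = 0
      have hrow : ∑ k : m, M b k * z k = 0 := congrFun hz b
      have hterms : ∀ k ∈ Finset.univ, M b k * z k ≤ 0 := by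
        intro k _
        by_cases hk : k = b
        · subst hk; rw [hzb0, mul_zero]
        · exact mul_nonpos_of_nonpos_of_nonneg (hoff b k (Ne.symm hk)) (hnn k)
      have hall := (Finset.sum_eq_zero_iff_of_nonpos hterms).mp hrow
      have hba : (inducedSub G S).Adj b a := hab.symm
      have hMba : M b a = -1 := hadjM b a hba
      have := hall a (Finset.mem_univ _)
      rw [hMba] at this
      linarith
    have := walk_prop (fun a => 0 < z a) hstep ((hind i0 i).some) hzi0
    exact this
  -- sign dichotomy
  have sign_dichotomy : ∀ x : m → ℝ, x ≠ 0 → M *ᵥ x = 0 →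
      (∀ i, 0 < x i) ∨ (∀ i, x i < 0) := by
    intro x hne hx
    obtain ⟨habs_eig, hprod⟩ := key_abs x hx
    have habs_ne : (fun i => |x i|) ≠ 0 := by
      intro h
      apply hne
      funext i
      have := congrFun h i
      simpa [abs_eq_zero] using this
    have habs_pos : ∀ i, 0 < |x i| :=
      pos_of_nonneg _ habs_eig (fun i => abs_nonneg _) habs_ne
    have hxne : ∀ i, x i ≠ 0 := fun i h => by
      have := habs_pos i; rw [h, abs_zero] at this; exact lt_irrefl _ this
    rcases Function.ne_iff.mp hne with ⟨i0, _⟩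
    have hstep : ∀ a b : m, (inducedSub G S).Adj a b → 0 < x i0 * x a → 0 < x i0 * x b := by
      intro a b hab h
      have hprodab : 0 < x a * x b := by
        rw [hprod a b hab]
        exact mul_pos (habs_pos a) (habs_pos b)
      have hsq : 0 < x a * x a := mul_self_pos.mpr (hxne a)
      nlinarith [mul_pos h hprodab, hsq]
    have h0 : 0 < x i0 * x i0 := mul_self_pos.mpr (hxne i0)
    have hall : ∀ i, 0 < x i0 * x i := by
      intro i
      exact walk_prop (fun b => 0 < x i0 * x b) hstep ((hind i0 i).some) h0
    rcases lt_or_gt_of_ne (hxne i0) with hneg | hpos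
    · right
      intro i
      have := hall i
      nlinarith
    · left
      intro i
      have := hall i
      nlinarith
  -- simplicity
  have simple : ∀ x y : m → ℝ, x ≠ 0 → M *ᵥ x = 0 → M *ᵥ y = 0 → ∃ a : ℝ, y = a • x := by
    intro x y hxne hx hy
    have hxs := sign_dichotomy x hxne hx
    have hxne' : ∀ i, x i ≠ 0 := by
      intro i
      rcases hxs with h | h
      · exact ne_of_gt (h i)
      · exact ne_of_lt (h i)
    obtain ⟨i0⟩ := (inferInstance : Nonempty m)
    refine ⟨y i0 / x i0, ?_⟩
    by_contra hne
    set z : m → ℝ := y - (y i0 / x i0) • x with hzdef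
    have hzne : z ≠ 0 := fun h => hne (by rwa [hzdef, sub_eq_zero] at h)
    have hz : M *ᵥ z = 0 := by
      rw [hzdef, Matrix.mulVec_sub, Matrix.mulVec_smul, hx, hy]
      simp
    have hzi0 : z i0 = 0 := by
      simp [hzdef, div_mul_cancel₀ _ (hxne' i0)]
    rcases sign_dichotomy z hzne hz with h | h
    · exact lt_irrefl _ (hzi0 ▸ h i0)
    · exact lt_irrefl _ (hzi0 ▸ h i0)
  -- translate hypotheses: eigenvector for lam ↔ null vector of M
  refine ⟨?_, ?_, ?_⟩
  · intro x y hxne hx hy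
    exact simple x y hxne ((hMx x).mpr hx) ((hMx y).mpr hy)
  · intro x hxne hx
    exact sign_dichotomy x hxne ((hMx x).mpr hx)
  · -- existence and uniqueness of normalized positive eigenvector
    obtain ⟨x, hxne, hxeig⟩ := hlam.1
    have hx0 : M *ᵥ x = 0 := (hMx x).mpr hxeig
    obtain ⟨habs_eig, -⟩ := key_abs x hx0
    have habs_ne : (fun i => |x i|) ≠ 0 := by
      intro h
      apply hxne
      funext i
      have := congrFun h i
      simpa [abs_eq_zero] using this
    have habs_pos : ∀ i, 0 < |x i| :=
      pos_of_nonneg _ habs_eig (fun i => abs_nonneg _) habs_ne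
    obtain ⟨imax, -, hmax⟩ := Finset.exists_max_image Finset.univ (fun i => |x i|)
      ⟨Classical.arbitrary m, Finset.mem_univ _⟩
    set c : ℝ := |x imax| with hc
    have hcpos : 0 < c := habs_pos imax
    set u : m → ℝ := fun i => c⁻¹ * |x i| with hudef
    have hupos : ∀ i, 0 < u i := fun i => mul_pos (inv_pos.mpr hcpos) (habs_pos i)
    have hule : ∀ i, u i ≤ 1 := by
      intro i
      rw [hudef]
      rw [inv_mul_le_iff₀ hcpos, mul_one]
      exact hmax i (Finset.mem_univ _)
    have humax : u imax = 1 := by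
      rw [hudef]
      exact inv_mul_cancel₀ (ne_of_gt hcpos)
    have hueig : M *ᵥ u = 0 := by
      have : u = c⁻¹ • (fun i => |x i|) := by
        funext i; simp [hudef]
      rw [this, Matrix.mulVec_smul, habs_eig, smul_zero]
    refine ⟨u, ⟨hupos, hule, ⟨imax, humax⟩, (hMx u).mp hueig⟩, ?_⟩
    intro y ⟨hypos, hyle, ⟨jmax, hjmax⟩, hyeig⟩
    have hy0 : M *ᵥ y = 0 := (hMx y).mpr hyeig
    have hune : u ≠ 0 := fun h => by
      have := congrFun h imax
      rw [humax] at this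
      norm_num at this
    obtain ⟨a, ha⟩ := simple u y hune hueig hy0
    have hapos : 0 < a := by
      have h1 := hypos imax
      rw [ha] at h1
      simp only [Pi.smul_apply, smul_eq_mul, humax, mul_one] at h1
      exact h1
    have ha1 : a = 1 := by
      have h1 : y imax = a := by
        rw [ha]; simp [humax]
      have h2 : a ≤ 1 := h1 ▸ hyle imax
      have h3 : y jmax = a * u jmax := by rw [ha]; simp
      have h4 : u jmax ≤ 1 := hule jmax
      have h5 : 0 < u jmax := hupos jmax
      nlinarith [hjmax, h3, h2, h4, h5]
    funext i
    rw [ha, ha1]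
    simp
end
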